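/- arXiv:2303.02409 — 6 statements merged into one kernel-verified Lean document; each statement's English description precedes it below -/
import Mathlib

section
/- The principal ideal of 𝓞 generated by γ + 2 is a maximal (in particular prime) ideal, and the residue ring 𝓞/(γ+2) is a finite field with exactly p elements. -/
open IntermediateField

open Polynomial

/-- Auxiliary: a primitive `p`-th root of unity (`p ≥ 3`) is not contained in
`ℚ(η + η⁻¹)` (here written via `γ = -(η + η⁻¹)`). -/
private lemma aux_eta_not_mem {p : ℕ} (hp3 : 3 ≤ p) (hppos : 0 < p)
    {K : Type*} [Field K] [CharZero K]
    (η : K) (hη : IsPrimitiveRoot η p) (hη0 : η ≠ 0) (γ : K) (hγη : γ = -(η + η⁻¹))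
    (hmem : η ∈ ℚ⟮γ⟯) : False := by
  set P : ℕ+ := ⟨p, hppos⟩ with hPdef
  have hηP : IsPrimitiveRoot η (P : ℕ) := hη
  set E : IntermediateField ℚ K := ℚ⟮η⟯ with hEdef
  set F : IntermediateField ℚ K := ℚ⟮γ⟯ with hFdef
  have hint : IsIntegral ℚ η := ((hη.isIntegral hppos).tower_top : IsIntegral ℚ η)
  have hinv : η⁻¹ = η ^ (p - 1) := by
    have h1 : η * η ^ (p - 1) = 1 := by
      have hpe : p - 1 + 1 = p := by omega
      rw [← pow_succ', hpe]; exact hη.pow_eq_one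
    field_simp [← h1]
    exact h1.symm
  have hγE : γ ∈ E := by
    rw [hγη]
    exact neg_mem (add_mem (mem_adjoin_simple_self ℚ η) (inv_mem (mem_adjoin_simple_self ℚ η)))
  have hγint : IsIntegral ℚ γ := by
    rw [hγη, hinv]
    exact (hint.add (hint.pow _)).neg
  have hFE : F = E := by
    apply le_antisymm
    · rw [hFdef, adjoin_simple_le_iff]; exact hγE
    · rw [hEdef, adjoin_simple_le_iff]; exact hmem
  set ηE : ↥E := AdjoinSimple.gen ℚ η with hηEdef
  have hηEP : IsPrimitiveRoot ηE P := IsPrimitiveRoot.coe_submonoidClass_iff.1 hηP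
  have hηE0 : ηE ≠ 0 := by
    intro h; apply hη0
    simpa [hηEdef] using congrArg (Subtype.val) h
  have hmin : minpoly ℚ ηE = cyclotomic P ℚ := (cyclotomic_eq_minpoly_rat hηEP P.pos).symm
  have hmininv : minpoly ℚ ηE⁻¹ = cyclotomic P ℚ := (cyclotomic_eq_minpoly_rat hηEP.inv P.pos).symm
  have hroot : aeval ηE⁻¹ (minpoly ℚ ηE) = 0 := by
    rw [hmin, ← hmininv]; exact minpoly.aeval ℚ _
  set PB : PowerBasis ℚ ↥E := IntermediateField.adjoin.powerBasis hint with hPBdef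
  have hPBgen : PB.gen = ηE := by rw [hPBdef, IntermediateField.adjoin.powerBasis_gen]
  have hrootPB : aeval ηE⁻¹ (minpoly ℚ PB.gen) = 0 := by rw [hPBgen]; exact hroot
  set σ : ↥E →ₐ[ℚ] ↥E := PB.lift ηE⁻¹ hrootPB with hσdef
  have hσg : σ ηE = ηE⁻¹ := by rw [← hPBgen, hσdef]; exact PB.lift_gen _ _
  set γE : ↥E := ⟨γ, hγE⟩ with hγEdef
  have hγEeq : γE = -(ηE + ηE⁻¹) := by
    apply Subtype.ext
    push_cast [hγEdef, hηEdef]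
    rw [hγη, AdjoinSimple.coe_gen]
  have hσγ : σ γE = γE := by
    rw [hγEeq, map_neg, map_add, hσg, map_inv₀, hσg, inv_inv, add_comm]
  have hadj : Algebra.adjoin ℚ {γE} = (⊤ : Subalgebra ℚ ↥E) := by
    apply Subalgebra.map_injective (f := E.val) (E.val.injective)
    erw [AlgHom.map_adjoin, Algebra.map_top, Set.image_singleton]
    have h2 : E.val.range = E.toSubalgebra := by
      ext z; simp [IntermediateField.mem_toSubalgebra]
    have h3 : (E.val) γE = γ := rfl
    rw [h3, h2, ← hFE, hFdef]
    exact (IntermediateField.adjoin_simple_toSubalgebra_of_isAlgebraic hγint.isAlgebraic).symm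
  have hησ : σ ηE = ηE := by
    have h1 : Algebra.adjoin ℚ {γE} ≤ AlgHom.equalizer σ (AlgHom.id ℚ ↥E) := by
      rw [Algebra.adjoin_le_iff]
      rintro y hy
      rw [Set.mem_singleton_iff] at hy
      subst hy
      exact hσγ
    have h2 : ηE ∈ AlgHom.equalizer σ (AlgHom.id ℚ ↥E) := by
      apply h1; rw [hadj]; trivial
    exact h2
  have hsq : ηE * ηE = 1 := by
    nth_rw 1 [← inv_inv ηE]
    rw [← hσg, hησ, inv_mul_cancel₀ hηE0]
  have hη2 : η ^ 2 = 1 := by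
    have := congrArg (Subtype.val) hsq
    push_cast [hηEdef] at this
    rw [pow_two]
    exact this
  have := Nat.le_of_dvd (by norm_num) (hη.dvd_of_pow_eq_one 2 hη2)
  omega

set_option synthInstance.maxHeartbeats 1000000 in
set_option maxHeartbeats 4000000 in
private theorem stmt0_aux {p : ℕ} (hp : p.Prime) (hodd : Odd p)
    {K : Type*} [Field K] [CharZero K]
    (ζ : K) (hζ : IsPrimitiveRoot ζ (2 * p)) (γ : K) (hγdef : γ = ζ + ζ⁻¹)
    (x : ↥(integralClosure ℤ ↥(ℚ⟮γ⟯)))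
    (hx : ((x : ↥(ℚ⟮γ⟯)) : K) = γ + 2) :
    (Ideal.span {x}).IsMaximal ∧ (Ideal.span {x}).IsPrime ∧
      IsField (↥(integralClosure ℤ ↥(ℚ⟮γ⟯)) ⧸ Ideal.span {x}) ∧
      Nat.card (↥(integralClosure ℤ ↥(ℚ⟮γ⟯)) ⧸ Ideal.span {x}) = p := by
  obtain ⟨k, hk⟩ := hodd
  have hp1 : 1 < p := hp.one_lt
  have hp3 : 3 ≤ p := by omega
  have hppos : 0 < p := hp.pos
  haveI : Fact p.Prime := ⟨hp⟩
  have hζ0 : ζ ≠ 0 := hζ.ne_zero (by positivity)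
  have h2p : ζ ^ (2 * p) = 1 := hζ.pow_eq_one
  have hzp : ζ ^ p = -1 := by
    rcases mul_self_eq_one_iff.mp
        (show ζ ^ p * ζ ^ p = 1 by rw [← pow_add, ← two_mul]; exact h2p) with h | h
    · exact absurd h (hζ.pow_ne_one_of_pos_of_lt hppos.ne' (by omega))
    · exact h
  set η : K := -ζ with hηdef
  have hηζ : η = ζ ^ (p + 1) := by rw [pow_succ, hzp, hηdef]; ring
  have hη : IsPrimitiveRoot η p := by
    rw [hηζ]
    have h2 : IsPrimitiveRoot (ζ ^ 2) p := hζ.pow (by positivity) rfl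
    have he : (ζ ^ 2) ^ ((p + 1) / 2) = ζ ^ (p + 1) := by
      rw [← pow_mul]; congr 1; omega
    rw [← he]
    refine h2.pow_of_coprime _ (Nat.Coprime.symm ((hp.coprime_iff_not_dvd).mpr ?_))
    intro hdvd
    have := Nat.le_of_dvd (by omega) hdvd
    omega
  have hη0 : η ≠ 0 := by simpa [hηdef] using hζ0
  have hγη : γ = -(η + η⁻¹) := by
    rw [hηdef, hγdef, inv_neg]; ring
  -- the big cyclotomic field E and its norm facts
  set P : ℕ+ := ⟨p, hppos⟩ with hPdef
  have hηP : IsPrimitiveRoot η (P : ℕ) := hη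
  set E : IntermediateField ℚ K := ℚ⟮η⟯ with hEdef
  have hint : IsIntegral ℚ η := ((hη.isIntegral hppos).tower_top : IsIntegral ℚ η)
  haveI : FiniteDimensional ℚ ↥E := IntermediateField.adjoin.finiteDimensional hint
  haveI hcyc : IsCyclotomicExtension {(P : ℕ)} ℚ ↥E := by
    have H := IntermediateField.adjoin_simple_toSubalgebra_of_isAlgebraic hint.isAlgebraic
    refine IsCyclotomicExtension.equiv _ _ _ (h := ?_) (.refl : E.toSubalgebra ≃ₐ[ℚ] _)
    rw [hEdef, H]
    exact hηP.adjoin_isCyclotomicExtension ℚ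
  set ηE : ↥E := AdjoinSimple.gen ℚ η with hηEdef
  have hηEP : IsPrimitiveRoot ηE P := IsPrimitiveRoot.coe_submonoidClass_iff.1 hηP
  haveI : Fact (Nat.Prime (P : ℕ)) := ⟨hp⟩
  have hP2 : P ≠ 2 := by
    intro h
    apply_fun ((↑) : ℕ+ → ℕ) at h
    simp [hPdef] at h
    omega
  have hirr : Irreducible (cyclotomic (P : ℕ) ℚ) := cyclotomic.irreducible_rat P.pos
  have hn1 : Algebra.norm ℚ (ηE - 1) = p := by
    exact hηEP.norm_sub_one_of_prime_ne_two' hirr (by exact_mod_cast hP2)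
  have hn2 : Algebra.norm ℚ (ηE⁻¹ - 1) = p := by
    exact hηEP.inv.norm_sub_one_of_prime_ne_two' hirr (by exact_mod_cast hP2)
  -- the element γ + 2 in E and its norm
  have hγE : γ ∈ E := by
    rw [hγη]
    exact neg_mem (add_mem (mem_adjoin_simple_self ℚ η) (inv_mem (mem_adjoin_simple_self ℚ η)))
  have h2E : γ + 2 ∈ E := add_mem hγE (by simpa using IntermediateField.coe_int_mem E 2)
  have hfacK : (η - 1) * (η⁻¹ - 1) = γ + 2 := by
    rw [hγη]
    field_simp
    ring
  have hfac : (⟨γ + 2, h2E⟩ : ↥E) = (ηE - 1) * (ηE⁻¹ - 1) := by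
    apply Subtype.ext
    push_cast [hηEdef]
    rw [AdjoinSimple.coe_gen, hfacK]
  have hnE : Algebra.norm ℚ (⟨γ + 2, h2E⟩ : ↥E) = (p : ℚ) * (p : ℚ) := by
    rw [hfac, map_mul, hn1, hn2]
  -- the tower F ≤ E
  have hle : ℚ⟮γ⟯ ≤ E := by rw [adjoin_simple_le_iff]; exact hγE
  set E' : IntermediateField ↥ℚ⟮γ⟯ K := extendScalars hle with hE'def
  haveI : FiniteDimensional ℚ ↥E' := (inferInstance : FiniteDimensional ℚ ↥E)
  haveI : FiniteDimensional ℚ ↥ℚ⟮γ⟯ := FiniteDimensional.left ℚ ↥ℚ⟮γ⟯ ↥E'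
  haveI : FiniteDimensional ↥ℚ⟮γ⟯ ↥E' := FiniteDimensional.right ℚ ↥ℚ⟮γ⟯ ↥E'
  have hγF : γ ∈ ℚ⟮γ⟯ := mem_adjoin_simple_self ℚ γ
  have h2F : γ + 2 ∈ ℚ⟮γ⟯ := add_mem hγF (by simpa using IntermediateField.coe_int_mem ℚ⟮γ⟯ 2)
  set d : ℕ := Module.finrank ↥ℚ⟮γ⟯ ↥E' with hddef
  have htower : (Algebra.norm ℚ (⟨γ + 2, h2F⟩ : ↥ℚ⟮γ⟯)) ^ d = (p : ℚ) * (p : ℚ) := by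
    have key : algebraMap ↥ℚ⟮γ⟯ ↥E' ⟨γ + 2, h2F⟩ = (⟨γ + 2, hle h2F⟩ : ↥E) := by
      apply Subtype.ext
      simp [IntermediateField.algebraMap_apply]
    calc (Algebra.norm ℚ (⟨γ + 2, h2F⟩ : ↥ℚ⟮γ⟯)) ^ d
        = Algebra.norm ℚ ((⟨γ + 2, h2F⟩ : ↥ℚ⟮γ⟯) ^ d) := by rw [map_pow]
      _ = Algebra.norm ℚ (Algebra.norm ↥ℚ⟮γ⟯ (algebraMap ↥ℚ⟮γ⟯ ↥E' ⟨γ + 2, h2F⟩)) := by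
            rw [Algebra.norm_algebraMap]
      _ = Algebra.norm ℚ (algebraMap ↥ℚ⟮γ⟯ ↥E' ⟨γ + 2, h2F⟩) :=
            Algebra.norm_norm (R := ℚ) (S := ↥ℚ⟮γ⟯)
      _ = Algebra.norm ℚ (⟨γ + 2, hle h2F⟩ : ↥E) := by rw [key]; rfl
      _ = (p : ℚ) * (p : ℚ) := hnE
  -- d = at least 2
  have hd0 : 0 < d := Module.finrank_pos
  have hd1 : d ≠ 1 := by
    intro h1
    have hbot : E' = ⊥ := IntermediateField.finrank_eq_one_iff.mp h1
    have hηE' : η ∈ E' := by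
      rw [hE'def, mem_extendScalars]
      exact mem_adjoin_simple_self ℚ η
    rw [hbot, IntermediateField.mem_bot] at hηE'
    obtain ⟨y, hy⟩ := hηE'
    have : η ∈ ℚ⟮γ⟯ := by rw [← hy]; exact y.2
    exact aux_eta_not_mem hp3 hppos η hη hη0 γ hγη (by assumption)
  -- norm of x over ℤ
  haveI : NumberField ↥ℚ⟮γ⟯ := ⟨⟩
  haveI iLoc : IsLocalization
      (Algebra.algebraMapSubmonoid (↥(integralClosure ℤ ↥ℚ⟮γ⟯)) (nonZeroDivisors ℤ)) ↥ℚ⟮γ⟯ :=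
    inferInstanceAs (IsLocalization
      (Algebra.algebraMapSubmonoid (NumberField.RingOfIntegers ↥ℚ⟮γ⟯) (nonZeroDivisors ℤ)) ↥ℚ⟮γ⟯)
  haveI iDD : IsDedekindDomain ↥(integralClosure ℤ ↥ℚ⟮γ⟯) :=
    inferInstanceAs (IsDedekindDomain (NumberField.RingOfIntegers ↥ℚ⟮γ⟯))
  haveI iFree : Module.Free ℤ ↥(integralClosure ℤ ↥ℚ⟮γ⟯) :=
    inferInstanceAs (Module.Free ℤ (NumberField.RingOfIntegers ↥ℚ⟮γ⟯))
  haveI iFin : Module.Finite ℤ ↥(integralClosure ℤ ↥ℚ⟮γ⟯) :=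
    inferInstanceAs (Module.Finite ℤ (NumberField.RingOfIntegers ↥ℚ⟮γ⟯))
  have hxF : (x : ↥ℚ⟮γ⟯) = (⟨γ + 2, h2F⟩ : ↥ℚ⟮γ⟯) := Subtype.ext hx
  have hnormloc : algebraMap ℤ ℚ (Algebra.norm ℤ x) = Algebra.norm ℚ ((x : ↥ℚ⟮γ⟯)) := by
    rw [← Algebra.norm_localization (Sₘ := ↥ℚ⟮γ⟯) ℤ (nonZeroDivisors ℤ)]
    rfl
  set n : ℤ := Algebra.norm ℤ x with hndef
  have hQ : ((n : ℚ)) ^ d = (p : ℚ) * (p : ℚ) := by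
    have : (n : ℚ) = Algebra.norm ℚ ((x : ↥ℚ⟮γ⟯)) := hnormloc
    rw [this, hxF]
    exact htower
  have hZ : n ^ d = (p : ℤ) ^ 2 := by
    have : ((n ^ d : ℤ) : ℚ) = (((p : ℤ) ^ 2 : ℤ) : ℚ) := by push_cast; rw [hQ]; ring
    exact_mod_cast this
  -- conclude natAbs n = p
  have habsn : (Algebra.norm ℤ x).natAbs = p := by
    have hm : n.natAbs ^ d = p ^ 2 := by
      have := congrArg Int.natAbs hZ
      rwa [Int.natAbs_pow, Int.natAbs_pow, Int.natAbs_natCast] at this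
    obtain ⟨t, ht⟩ : p ∣ n.natAbs :=
      hp.dvd_of_dvd_pow (n := d) (by rw [hm]; exact dvd_pow_self p two_ne_zero)
    rw [ht] at hm
    have ht0 : t ≠ 0 := by
      rintro rfl
      rw [mul_zero, zero_pow (by omega)] at hm
      exact (show p ^ 2 ≠ 0 by positivity) hm.symm
    have hple : p ^ d ≤ p ^ 2 := by
      calc p ^ d ≤ p ^ d * t ^ d := Nat.le_mul_of_pos_right _ (by positivity)
        _ = (p * t) ^ d := (mul_pow p t d).symm
        _ = p ^ 2 := hm
    have hd2 : d = 2 := by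
      have := (Nat.pow_le_pow_iff_right hp1).mp hple
      omega
    have ht1 : t = 1 := by
      rw [hd2, mul_pow] at hm
      have h1 : t ^ 2 = 1 :=
        Nat.eq_of_mul_eq_mul_left (show 0 < p ^ 2 by positivity) (by rw [hm, mul_one])
      have h2 : t ≤ 1 := by nlinarith
      have h3 : 1 ≤ t := by nlinarith
      omega
    show n.natAbs = p
    rw [ht, ht1, mul_one]
  -- the final conclusion via absNorm
  have habs2 : Ideal.absNorm (Ideal.span {x}) = p := by
    rw [Ideal.absNorm_span_singleton, habsn]
  have hne : Ideal.span {x} ≠ ⊥ := by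
    intro h
    rw [h, Ideal.absNorm_bot] at habs2
    exact hp.ne_zero habs2.symm
  have hprime : (Ideal.span {x}).IsPrime :=
    Ideal.isPrime_of_irreducible_absNorm
      (by rw [habs2]; exact Nat.irreducible_iff_nat_prime p |>.mpr hp)
  have hmax : (Ideal.span {x}).IsMaximal := hprime.isMaximal hne
  haveI := hmax
  refine ⟨hmax, hprime, ?_, ?_⟩
  · exact (Ideal.Quotient.maximal_ideal_iff_isField_quotient _).mp hmax
  · rw [← habs2, Ideal.absNorm_apply, Submodule.cardQuot_apply]


/-- Let `p` be an odd prime, `ζ` a primitive `2p`-th root of unity (in a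
field of characteristic zero), `γ := ζ + ζ⁻¹` and let `𝓞` be the ring of integers of `ℚ(γ)`
(realized as the integral closure of `ℤ` in `ℚ⟮γ⟯`).  Then the principal ideal of `𝓞`
generated by `γ + 2` is a maximal (in particular prime) ideal, and the residue ring
`𝓞/(γ+2)` is a finite field with exactly `p` elements. -/
theorem stmt0 {p : ℕ} (hp : p.Prime) (hodd : Odd p)
    {K : Type*} [Field K] [CharZero K]
    (ζ : K) (hζ : IsPrimitiveRoot ζ (2 * p))
    (x : ↥(integralClosure ℤ ↥(ℚ⟮ζ + ζ⁻¹⟯)))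
    (hx : ((x : ↥(ℚ⟮ζ + ζ⁻¹⟯)) : K) = (ζ + ζ⁻¹) + 2) :
    (Ideal.span {x}).IsMaximal ∧ (Ideal.span {x}).IsPrime ∧
      IsField (↥(integralClosure ℤ ↥(ℚ⟮ζ + ζ⁻¹⟯)) ⧸ Ideal.span {x}) ∧
      Nat.card (↥(integralClosure ℤ ↥(ℚ⟮ζ + ζ⁻¹⟯)) ⧸ Ideal.span {x}) = p :=
  stmt0_aux hp hodd ζ hζ (ζ + ζ⁻¹) rfl x hx
end

section
/- For every integer k with 0 < k < p, the element u_k := ζ^k + ζ^{−k} + (−1)^k·2 lies in 𝓞 and is a unit of 𝓞. -/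
open IntermediateField

/-- Let `p` be an odd prime, `ζ` a primitive `2p`-th root of unity (in a
field of characteristic zero), `γ := ζ + ζ⁻¹` and let `𝓞` be the ring of integers of `ℚ(γ)`
(realized as the integral closure of `ℤ` in `ℚ⟮γ⟯`).  For every integer `k` with
`0 < k < p`, the element `u_k := ζ^k + ζ^{-k} + (-1)^k·2` lies in `𝓞` and is a unit
of `𝓞`. -/
theorem stmt1 {p : ℕ} (hp : p.Prime) (hodd : Odd p)
    {K : Type*} [Field K] [CharZero K]
    (ζ : K) (hζ : IsPrimitiveRoot ζ (2 * p))
    (k : ℕ) (hk0 : 0 < k) (hkp : k < p) :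
    ∃ u : ↥(integralClosure ℤ ↥(ℚ⟮ζ + ζ⁻¹⟯)),
      ((u : ↥(ℚ⟮ζ + ζ⁻¹⟯)) : K) = ζ ^ k + ζ⁻¹ ^ k + (-1) ^ k * 2 ∧ IsUnit u := by
  have hppos : 0 < p := hp.pos
  have h2p : 0 < 2 * p := by omega
  have hζ0 : ζ ≠ 0 := hζ.ne_zero (by omega)
  have hζint : IsIntegral ℤ ζ := hζ.isIntegral h2p
  set F : IntermediateField ℚ K := ℚ⟮ζ + ζ⁻¹⟯ with hF
  have hγF : ζ + ζ⁻¹ ∈ F := mem_adjoin_simple_self ℚ _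
  -- membership of ζ^n + ζ⁻¹^n in F for all n
  have hrec : ∀ n : ℕ, (ζ ^ n + ζ⁻¹ ^ n ∈ F) ∧ (ζ ^ (n+1) + ζ⁻¹ ^ (n+1) ∈ F) := by
    intro n
    induction n with
    | zero =>
      constructor
      · simp only [pow_zero]
        exact add_mem F.one_mem F.one_mem
      · simpa using hγF
    | succ n ih =>
      refine ⟨ih.2, ?_⟩
      have hid : ζ ^ (n+2) + ζ⁻¹ ^ (n+2)
          = (ζ + ζ⁻¹) * (ζ ^ (n+1) + ζ⁻¹ ^ (n+1)) - (ζ ^ n + ζ⁻¹ ^ n) := by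
        have h1 : ζ * ζ⁻¹ = 1 := mul_inv_cancel₀ hζ0
        linear_combination (-(ζ ^ n + ζ⁻¹ ^ n)) * h1
      rw [hid]
      exact sub_mem (mul_mem hγF ih.2) ih.1
  -- the element u and its properties
  set u : K := ζ ^ k + ζ⁻¹ ^ k + (-1) ^ k * 2 with hu
  have huF : u ∈ F := by
    refine add_mem (hrec k).1 (mul_mem (pow_mem (neg_mem F.one_mem) k) ?_)
    have : (2 : K) = 1 + 1 := by norm_num
    rw [this]
    exact add_mem F.one_mem F.one_mem
  -- roots of unity facts
  have h2pone : ζ ^ (2 * p) = 1 := hζ.pow_eq_one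
  have hζp : ζ ^ p = -1 := by
    have hsq : (ζ ^ p) ^ 2 = 1 := by rw [← pow_mul, mul_comm]; exact h2pone
    have hne : ζ ^ p ≠ 1 := hζ.pow_ne_one_of_pos_of_lt hppos.ne' (by omega)
    have : (ζ ^ p - 1) * (ζ ^ p + 1) = 0 := by ring_nf; linear_combination hsq
    rcases mul_eq_zero.mp this with h | h
    · exact absurd (sub_eq_zero.mp h) hne
    · exact eq_neg_of_add_eq_zero_left h
  have hnegζp : (-ζ) ^ p = 1 := by
    rw [neg_pow, hodd.neg_one_pow, hζp]; ring
  set x : K := (-ζ) ^ k with hxdef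
  have hxp : x ^ p = 1 := by rw [hxdef, ← pow_mul, mul_comm, pow_mul, hnegζp, one_pow]
  have hxne1 : x ≠ 1 := by
    intro h
    have h2k : ζ ^ (2 * k) ≠ 1 := hζ.pow_ne_one_of_pos_of_lt (by omega) (by omega)
    apply h2k
    have : x ^ 2 = ζ ^ (2 * k) := by
      rw [hxdef, ← pow_mul, mul_comm k 2, pow_mul, pow_mul, neg_pow, ]
      norm_num
    rw [← this, h, one_pow]
  have hxnegne1 : x ≠ -1 := by
    intro h
    rw [h, hodd.neg_one_pow] at hxp
    norm_num at hxp
  have hx2ne1 : x ^ 2 ≠ 1 := by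
    intro h
    have : (x - 1) * (x + 1) = 0 := by ring_nf; linear_combination h
    rcases mul_eq_zero.mp this with h' | h'
    · exact hxne1 (sub_eq_zero.mp h')
    · exact hxnegne1 (eq_neg_of_add_eq_zero_left h')
  obtain ⟨r, hr⟩ := hodd
  set m : ℕ := r + 1 with hm
  set S : K := ∑ j ∈ Finset.range m, (x ^ 2) ^ j with hS
  have hSval : (1 + x) * S = 1 := by
    have hgeom : S = ((x ^ 2) ^ m - 1) / (x ^ 2 - 1) := geom_sum_eq hx2ne1 m
    have hx2m : (x ^ 2) ^ m = x := by
      have : 2 * m = p + 1 := by omega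
      rw [← pow_mul, this, pow_succ, hxp, one_mul]
    rw [hgeom, hx2m]
    field_simp [sub_ne_zero.mpr hx2ne1]
    ring
  set w : K := ζ ^ k * S ^ 2 with hw
  -- u * w = 1
  have hεz : x = (-1) ^ k * ζ ^ k := by rw [hxdef, neg_pow]
  have hε2 : ((-1 : K) ^ k) ^ 2 = 1 := by
    rw [← pow_mul, mul_comm, pow_mul]; norm_num
  have hz1 : ζ ^ k * ζ⁻¹ ^ k = 1 := by
    rw [← mul_pow, mul_inv_cancel₀ hζ0, one_pow]
  have key : (1 + x) ^ 2 * S ^ 2 = 1 := by rw [← mul_pow, hSval, one_pow]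
  have huw : u * w = 1 := by
    rw [hu, hw, hεz] at *
    linear_combination key + S ^ 2 * hz1 - (ζ ^ k) ^ 2 * S ^ 2 * hε2
  -- w ∈ F
  have hune : u ≠ 0 := left_ne_zero_of_mul_eq_one huw
  have hwinv : w = u⁻¹ := eq_inv_of_mul_eq_one_left (by rw [mul_comm]; exact huw)
  have hwF : w ∈ F := by rw [hwinv]; exact inv_mem huF
  -- integrality
  have hζcl : ζ ∈ integralClosure ℤ K := hζint
  have huint : u ∈ integralClosure ℤ K := by
    refine add_mem (add_mem (pow_mem hζcl k) ?_) ?_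
    · have hinvpow : ζ⁻¹ = ζ ^ (2 * p - 1) := by
        refine (eq_inv_of_mul_eq_one_left ?_).symm
        rw [← pow_succ]
        have h' : 2 * p - 1 + 1 = 2 * p := by omega
        rw [h', h2pone]
      rw [hinvpow]
      exact pow_mem (pow_mem hζcl _) _
    · refine mul_mem (pow_mem (neg_mem (one_mem _)) k) ?_
      have : (2 : K) = 1 + 1 := by norm_num
      rw [this]
      exact add_mem (one_mem _) (one_mem _)
  have hwint : w ∈ integralClosure ℤ K := by
    refine mul_mem (pow_mem hζcl k) (pow_mem ?_ 2)
    exact sum_mem fun j _ => pow_mem (pow_mem (pow_mem (neg_mem hζcl) k) 2) j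
  -- package
  have hinj : Function.Injective (algebraMap ↥F K) := (algebraMap ↥F K).injective
  set Fu : ↥F := ⟨u, huF⟩ with hFu
  set Fw : ↥F := ⟨w, hwF⟩ with hFw
  have hFuint : IsIntegral ℤ Fu := by
    rw [← isIntegral_algebraMap_iff hinj]
    exact huint
  have hFwint : IsIntegral ℤ Fw := by
    rw [← isIntegral_algebraMap_iff hinj]
    exact hwint
  refine ⟨⟨Fu, hFuint⟩, rfl, ?_⟩
  refine IsUnit.of_mul_eq_one ⟨Fw, hFwint⟩ ?_
  ext
  exact huw
end

section
/- For every integer k with 0 < k < p, the element v_k := ζ^k + ζ^{−k} − (−1)^k·2 lies in 𝓞 and generates the same ideal of 𝓞 as γ + 2; i.e., (v_k) = (γ + 2) as ideals of 𝓞. -/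
open IntermediateField

/-- Let `p` be an odd prime, `ζ` a primitive `2p`-th root of unity (in a
field of characteristic zero), `γ := ζ + ζ⁻¹` and let `𝓞` be the ring of integers of `ℚ(γ)`
(realized as the integral closure of `ℤ` in `ℚ⟮γ⟯`).  For every integer `k` with
`0 < k < p`, the element `v_k := ζ^k + ζ^{-k} - (-1)^k·2` lies in `𝓞` and generates the
same ideal of `𝓞` as `γ + 2`, i.e. `(v_k) = (γ + 2)` as ideals of `𝓞`. -/
theorem stmt2 {p : ℕ} (hp : p.Prime) (hodd : Odd p)
    {K : Type*} [Field K] [CharZero K]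
    (ζ : K) (hζ : IsPrimitiveRoot ζ (2 * p))
    (x : ↥(integralClosure ℤ ↥(ℚ⟮ζ + ζ⁻¹⟯)))
    (hx : ((x : ↥(ℚ⟮ζ + ζ⁻¹⟯)) : K) = (ζ + ζ⁻¹) + 2)
    (k : ℕ) (hk0 : 0 < k) (hkp : k < p) :
    ∃ v : ↥(integralClosure ℤ ↥(ℚ⟮ζ + ζ⁻¹⟯)),
      ((v : ↥(ℚ⟮ζ + ζ⁻¹⟯)) : K) = ζ ^ k + ζ⁻¹ ^ k - (-1) ^ k * 2 ∧
      Ideal.span {v} = Ideal.span {x} := by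
  have hp1 : 1 < p := hp.one_lt
  have h2p : 0 < 2 * p := by positivity
  have hζ0 : ζ ≠ 0 := hζ.ne_zero (by positivity)
  -- ζ^p = -1
  have hζp : ζ ^ p = -1 := by
    have h2 : (ζ ^ p - 1) * (ζ ^ p + 1) = 0 := by
      have : ζ ^ (2 * p) = 1 := hζ.pow_eq_one
      rw [mul_comm] at this
      rw [pow_mul] at this
      linear_combination this
    rcases mul_eq_zero.mp h2 with h | h
    · exfalso
      have hone : ζ ^ p = 1 := by linear_combination h
      have hd := (hζ.pow_eq_one_iff_dvd p).mp hone
      have := Nat.le_of_dvd (by omega) hd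
      omega
    · linear_combination h
  set η : K := -ζ with hη_def
  have hη0 : η ≠ 0 := neg_ne_zero.mpr hζ0
  have hηp : η ^ p = 1 := by
    rw [hη_def, Odd.neg_pow hodd, hζp, neg_neg]
  have hηord : ∀ j : ℕ, 0 < j → j < p → η ^ j ≠ 1 := by
    intro j hj0 hjp hj
    have hdvd : orderOf η ∣ p := orderOf_dvd_of_pow_eq_one hηp
    rcases hp.eq_one_or_self_of_dvd _ hdvd with h1 | hpp
    · have hη1 : η = 1 := orderOf_eq_one_iff.mp h1
      have hζ2 : ζ ^ 2 = 1 := by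
        have : ζ = -1 := by rw [hη_def] at hη1; linear_combination -hη1
        rw [this]; ring
      have hd := (hζ.pow_eq_one_iff_dvd 2).mp hζ2
      have := Nat.le_of_dvd (by norm_num) hd
      omega
    · have h2 : orderOf η ∣ j := orderOf_dvd_of_pow_eq_one hj
      rw [hpp] at h2
      exact absurd (Nat.le_of_dvd hj0 h2) (by omega)
  have hη1 : η ≠ 1 := by
    intro h
    exact hηord 1 one_pos hp1 (by rw [pow_one, h])
  have hηk1 : η ^ k ≠ 1 := hηord k hk0 hkp
  have h1η : (1 : K) - η ≠ 0 := sub_ne_zero.mpr (Ne.symm hη1)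
  have h1ηi : (1 : K) - η⁻¹ ≠ 0 :=
    sub_ne_zero.mpr fun h => hη1 (inv_eq_one.mp h.symm)
  -- integrality facts
  have hζint : IsIntegral ℤ ζ := hζ.isIntegral h2p
  have hηint : IsIntegral ℤ η := hζint.neg
  have hηinv : η⁻¹ = η ^ (p - 1) := by
    apply inv_eq_of_mul_eq_one_right
    rw [← pow_succ']
    have : p - 1 + 1 = p := by omega
    rw [this, hηp]
  have hηinvint : IsIntegral ℤ η⁻¹ := by rw [hηinv]; exact hηint.pow _
  have hζinv : ζ⁻¹ = -η⁻¹ := by rw [hη_def, inv_neg, neg_neg]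
  have hζinvint : IsIntegral ℤ ζ⁻¹ := by rw [hζinv]; exact hηinvint.neg
  have hsumint : ∀ (m : ℕ) (z : K), IsIntegral ℤ z →
      IsIntegral ℤ (∑ i ∈ Finset.range m, z ^ i) := by
    intro m z hz
    induction m with
    | zero => simpa using isIntegral_zero
    | succ n ih =>
      rw [Finset.sum_range_succ]
      exact ih.add (hz.pow _)
  -- membership of the powers in the subfield
  have hmem : ∀ j : ℕ, ζ ^ j + ζ⁻¹ ^ j ∈ ℚ⟮ζ + ζ⁻¹⟯ := by
    intro j
    induction j using Nat.strong_induction_on with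
    | _ j ih =>
      match j with
      | 0 => simpa using add_mem (one_mem ℚ⟮ζ + ζ⁻¹⟯) (one_mem ℚ⟮ζ + ζ⁻¹⟯)
      | 1 => simpa using mem_adjoin_simple_self ℚ (ζ + ζ⁻¹)
      | (n+2) =>
        have h1 := ih (n+1) (by omega)
        have h0 := ih n (by omega)
        have hg := mem_adjoin_simple_self ℚ (ζ + ζ⁻¹)
        have key : ζ ^ (n+2) + ζ⁻¹ ^ (n+2)
            = (ζ + ζ⁻¹) * (ζ ^ (n+1) + ζ⁻¹ ^ (n+1)) - (ζ ^ n + ζ⁻¹ ^ n) := by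
          have hzz : ζ * ζ⁻¹ = 1 := mul_inv_cancel₀ hζ0
          linear_combination (-(ζ⁻¹ ^ n + ζ ^ n)) * hzz
        rw [key]
        exact sub_mem (mul_mem hg h1) h0
  have h2S : (2 : K) ∈ ℚ⟮ζ + ζ⁻¹⟯ := by
    have := add_mem (one_mem ℚ⟮ζ + ζ⁻¹⟯) (one_mem ℚ⟮ζ + ζ⁻¹⟯)
    rw [one_add_one_eq_two] at this
    exact this
  -- v_K and its membership
  set vK : K := ζ ^ k + ζ⁻¹ ^ k - (-1) ^ k * 2 with hvK_def
  have hvS : vK ∈ ℚ⟮ζ + ζ⁻¹⟯ := by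
    apply sub_mem (hmem k)
    exact mul_mem (pow_mem (neg_mem (one_mem ℚ⟮ζ + ζ⁻¹⟯)) k) h2S
  -- sign bookkeeping
  set s : K := (-1) ^ k with hs_def
  have hss : s * s = 1 := by
    rw [hs_def, ← mul_pow]; norm_num
  have hζk : ζ ^ k = s * η ^ k := by
    have : ζ = -1 * η := by rw [hη_def]; ring
    rw [this, mul_pow, hs_def]
  have hζik : ζ⁻¹ ^ k = s * η⁻¹ ^ k := by
    have : ζ⁻¹ = -1 * η⁻¹ := by rw [hζinv]; ring
    rw [this, mul_pow, hs_def]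
  have hηk1' : η ^ k * η⁻¹ ^ k = 1 := by
    rw [← mul_pow, mul_inv_cancel₀ hη0, one_pow]
  -- factorizations
  have hvfac : vK = -s * ((1 - η ^ k) * (1 - η⁻¹ ^ k)) := by
    rw [hvK_def, hζk, hζik]
    linear_combination s * hηk1'
  have hxfac : ζ + ζ⁻¹ + 2 = (1 - η) * (1 - η⁻¹) := by
    rw [hζinv]
    have : η⁻¹ * η = 1 := inv_mul_cancel₀ hη0
    linear_combination -this
  -- geometric-sum identities
  set A : K := ∑ i ∈ Finset.range k, η ^ i with hA_def
  set B : K := ∑ i ∈ Finset.range k, η⁻¹ ^ i with hB_def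
  have gsA : (1 : K) - η ^ k = (1 - η) * A := by
    have := geom_sum_mul η k
    rw [← hA_def] at this
    linear_combination this
  have gsB : (1 : K) - η⁻¹ ^ k = (1 - η⁻¹) * B := by
    have := geom_sum_mul η⁻¹ k
    rw [← hB_def] at this
    linear_combination this
  -- inverse exponent k'
  have hcop : Nat.Coprime k p := by
    have hnd : ¬ p ∣ k := fun h => absurd (Nat.le_of_dvd hk0 h) (by omega)
    exact (hp.coprime_iff_not_dvd.mpr hnd).symm
  obtain ⟨k', -, hkk'⟩ := Nat.exists_mul_mod_eq_one_of_coprime hcop hp1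
  have hηkk' : η ^ (k * k') = η := by
    conv_lhs => rw [← Nat.div_add_mod (k * k') p]
    rw [pow_add, pow_mul, hηp, one_pow, one_mul, hkk', pow_one]
  have hηikk' : η⁻¹ ^ (k * k') = η⁻¹ := by
    rw [inv_pow, hηkk']
  set A' : K := ∑ i ∈ Finset.range k', (η ^ k) ^ i with hA'_def
  set B' : K := ∑ i ∈ Finset.range k', (η⁻¹ ^ k) ^ i with hB'_def
  have gsA' : (1 : K) - η = (1 - η ^ k) * A' := by
    have hgg := geom_sum_mul (η ^ k) k'
    rw [← pow_mul, hηkk', ← hA'_def] at hgg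
    linear_combination hgg
  have gsB' : (1 : K) - η⁻¹ = (1 - η⁻¹ ^ k) * B' := by
    have hgg := geom_sum_mul (η⁻¹ ^ k) k'
    rw [← pow_mul, hηikk', ← hB'_def] at hgg
    linear_combination hgg
  -- nonvanishing
  have hx0 : ζ + ζ⁻¹ + 2 ≠ 0 := by
    rw [hxfac]
    exact mul_ne_zero h1η h1ηi
  have hηik1 : η⁻¹ ^ k ≠ 1 := by
    rw [inv_pow]
    exact fun h => hηk1 (by rw [← inv_inv (η ^ k), h, inv_one])
  have hs0 : s ≠ 0 := by rw [hs_def]; exact pow_ne_zero _ (by norm_num)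
  have hv0 : vK ≠ 0 := by
    rw [hvfac]
    exact mul_ne_zero (neg_ne_zero.mpr hs0)
      (mul_ne_zero (sub_ne_zero.mpr (Ne.symm hηk1))
        (sub_ne_zero.mpr (Ne.symm hηik1)))
  -- elements of the subfield
  set Sx : ↥(ℚ⟮ζ + ζ⁻¹⟯) := (x : ↥(ℚ⟮ζ + ζ⁻¹⟯)) with hSx_def
  have hSxK : (Sx : K) = ζ + ζ⁻¹ + 2 := hx
  set vS : ↥(ℚ⟮ζ + ζ⁻¹⟯) := ⟨vK, hvS⟩ with hvS_def
  have hSx0 : Sx ≠ 0 := fun h => hx0 (by rw [← hSxK, h]; simp)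
  have hvS0 : vS ≠ 0 := fun h => hv0 (by rw [show vK = (vS : K) from rfl, h]; simp)
  have hinj : Function.Injective (algebraMap ↥(ℚ⟮ζ + ζ⁻¹⟯) K) :=
    (algebraMap ↥(ℚ⟮ζ + ζ⁻¹⟯) K).injective
  have hcoe_div : ∀ a b : ↥(ℚ⟮ζ + ζ⁻¹⟯),
      ((a / b : ↥(ℚ⟮ζ + ζ⁻¹⟯)) : K) = (a : K) / (b : K) := fun a b =>
    map_div₀ (algebraMap ↥(ℚ⟮ζ + ζ⁻¹⟯) K) a b
  -- c₀ = v/x is integral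
  have hc₀K : ((vS / Sx : ↥(ℚ⟮ζ + ζ⁻¹⟯)) : K) = -s * (A * B) := by
    rw [hcoe_div, hSxK, show ((vS : K)) = vK from rfl, hvfac, hxfac, gsA, gsB,
      div_eq_iff (mul_ne_zero h1η h1ηi)]
    ring
  have hsint : IsIntegral ℤ s := by
    rw [hs_def]; exact (isIntegral_one.neg).pow k
  have hcKint : IsIntegral ℤ (((vS / Sx : ↥(ℚ⟮ζ + ζ⁻¹⟯)) : K)) := by
    rw [hc₀K]
    exact (hsint.neg).mul ((hsumint k η hηint).mul (hsumint k η⁻¹ hηinvint))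
  have hcint : IsIntegral ℤ (vS / Sx : ↥(ℚ⟮ζ + ζ⁻¹⟯)) :=
    (isIntegral_algebraMap_iff hinj).mp hcKint
  -- c'₀ = x/v is integral
  have hvfac' : -s * vK = (1 - η ^ k) * (1 - η⁻¹ ^ k) := by
    rw [hvfac, ← mul_assoc, neg_mul_neg, hss, one_mul]
  have hc'₀K : ((Sx / vS : ↥(ℚ⟮ζ + ζ⁻¹⟯)) : K) = -s * (A' * B') := by
    rw [hcoe_div, hSxK, show ((vS : K)) = vK from rfl, hxfac, gsA', gsB',
      div_eq_iff hv0]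
    linear_combination (-(A' * B')) * hvfac'
  have hc'Kint : IsIntegral ℤ (((Sx / vS : ↥(ℚ⟮ζ + ζ⁻¹⟯)) : K)) := by
    rw [hc'₀K]
    exact (hsint.neg).mul ((hsumint k' (η ^ k) (hηint.pow k)).mul
      (hsumint k' (η⁻¹ ^ k) (hηinvint.pow k)))
  have hc'int : IsIntegral ℤ (Sx / vS : ↥(ℚ⟮ζ + ζ⁻¹⟯)) :=
    (isIntegral_algebraMap_iff hinj).mp hc'Kint
  -- v as element of the ring of integers
  have hvKint : IsIntegral ℤ vK := by
    rw [hvK_def]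
    refine ((hζint.pow k).add (hζinvint.pow k)).sub (hsint.mul ?_)
    have : ((2 : K)) = (1 : K) + 1 := by norm_num
    rw [this]
    exact isIntegral_one.add isIntegral_one
  have hvSint : IsIntegral ℤ vS :=
    (isIntegral_algebraMap_iff hinj).mp hvKint
  refine ⟨⟨vS, hvSint⟩, rfl, ?_⟩
  have hdvd1 : x ∣ (⟨vS, hvSint⟩ : integralClosure ℤ ↥(ℚ⟮ζ + ζ⁻¹⟯)) := by
    refine ⟨⟨vS / Sx, hcint⟩, ?_⟩
    apply Subtype.ext
    show vS = Sx * (vS / Sx)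
    field_simp
  have hdvd2 : (⟨vS, hvSint⟩ : integralClosure ℤ ↥(ℚ⟮ζ + ζ⁻¹⟯)) ∣ x := by
    refine ⟨⟨Sx / vS, hc'int⟩, ?_⟩
    apply Subtype.ext
    show Sx = vS * (Sx / vS)
    field_simp
  exact le_antisymm (Ideal.span_singleton_le_span_singleton.mpr hdvd1)
    (Ideal.span_singleton_le_span_singleton.mpr hdvd2)
end

section
/- For every reduced word I of the longest element w₀, one has Y_I • [e] = 𝟏 and Y_I • [w₀] = 𝟏; in other words, the Schubert class ζ_{w₀} and the special Schubert class σ_{w₀} both equal the fundamental class 𝟏. -/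
open scoped Classical

noncomputable section

namespace RootCtx

open MvPolynomial

/-- `S = Sym(V) = ℚ[α_i : i ∈ ι]`, the symmetric algebra of the span `V` of the root
system, written in the basis of simple roots (the variable `X i` *is* the simple root
`α_i`). -/
abbrev S (ι : Type) : Type := MvPolynomial ι ℚ

/-- `Q`, the fraction field of `S`. -/
abbrev Q (ι : Type) : Type := FractionRing (S ι)

variable {ι : Type} [Fintype ι] {W : Type} [Group W] [Fintype W]

/-- `x_Π := ∏_{α ∈ Φ⁺} (-α)`. -/
def xPi (P : Finset (S ι)) : S ι := ∏ a ∈ P, (-a)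

/-- The length of `w ∈ W`, as the number of positive roots sent to negative roots. -/
def len (φ : W →* (S ι ≃ₐ[ℚ] S ι)) (P : Finset (S ι)) (w : W) : ℕ :=
  Set.ncard {a : S ι | a ∈ P ∧ -(φ w a) ∈ P}

/-- `l` is a reduced word of `w`. -/
def IsRed (φ : W →* (S ι ≃ₐ[ℚ] S ι)) (P : Finset (S ι)) (sr : ι → W)
    (l : List ι) (w : W) : Prop :=
  (l.map sr).prod = w ∧ l.length = len φ P w

/-- The Hecke (push-pull) operator `Y_i`: `(Y_i • z)(v) = (z(v s_i) - z(v)) / v(α_i)`. -/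
def hecke (φ : W →* (S ι ≃ₐ[ℚ] S ι)) (sr : ι → W) (i : ι) (z : W → Q ι) : W → Q ι :=
  fun v => (z (v * sr i) - z v) / algebraMap (S ι) (Q ι) (φ v (X i))

/-- `Y_I • z = Y_{i₁} • (⋯ • (Y_{i_l} • z))` for `I = (i₁, …, i_l)`. -/
def heckeWord (φ : W →* (S ι ≃ₐ[ℚ] S ι)) (sr : ι → W) (l : List ι) (z : W → Q ι) :
    W → Q ι :=
  l.foldr (hecke φ sr) z

/-- The class `[u]` of the fixed point `u`, with `[u](u) = u(x_Π)` and all other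
components `0`. -/
def fixedPt (φ : W →* (S ι ≃ₐ[ℚ] S ι)) (P : Finset (S ι)) (u : W) : W → Q ι :=
  fun v => if v = u then algebraMap (S ι) (Q ι) (φ u (xPi P)) else 0

/-- The divided difference operator `X_i(f) = (f - s_i(f))/α_i` on the fraction field. -/
def dd (ψ : W →* RingAut (Q ι)) (sr : ι → W) (i : ι) (f : Q ι) : Q ι :=
  (f - ψ (sr i) f) / algebraMap (S ι) (Q ι) (X i)

/-- `X_I = X_{i₁} ∘ ⋯ ∘ X_{i_l}` for `I = (i₁, …, i_l)`. -/
def ddWord (ψ : W →* RingAut (Q ι)) (sr : ι → W) (l : List ι) (f : Q ι) : Q ι :=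
  l.foldr (dd ψ sr) f

/-- Membership in the structure algebra `Z`: for every positive root `a` (with associated
reflection `ref a`) and every `w`, `a` divides `z(s_a w) - z(w)` in `S`. -/
def inZ (ref : S ι → W) (P : Finset (S ι)) (z : W → S ι) : Prop :=
  ∀ a ∈ P, ∀ w : W, a ∣ (z (ref a * w) - z w)

/-- All the axioms of the setup: `Φ` is a reduced crystallographic finite root system
spanning `V` with simple roots the `X i` and positive roots `P`; `W` (a finite group) is
its Weyl group, acting faithfully on `S = Sym(V)` via `φ` (extended to the fraction field
`Q` via `ψ`), generated by the simple reflections `sr i`; `ref a` is the reflection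
attached to the (positive) root `a`. -/
structure IsRootCtx (φ : W →* (S ι ≃ₐ[ℚ] S ι)) (ψ : W →* RingAut (Q ι))
    (sr : ι → W) (ref : S ι → W) (P : Finset (S ι)) : Prop where
  /-- the action of `W` on `S` is faithful -/
  faithful : Function.Injective φ
  /-- the action on `Q` extends the action on `S` -/
  compat : ∀ (w : W) (f : S ι),
    ψ w (algebraMap (S ι) (Q ι) f) = algebraMap (S ι) (Q ι) (φ w f)
  /-- `W` is generated by the simple reflections -/
  gen : Subgroup.closure (Set.range sr) = ⊤
  /-- `0` is not a root -/
  zero_not_mem : (0 : S ι) ∉ P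
  /-- the simple roots are positive roots -/
  simple_mem : ∀ i, X i ∈ P
  /-- every positive root is a non-negative integral combination of the simple roots -/
  pos_nat : ∀ a ∈ P, ∃ c : ι → ℕ, a = ∑ i, (c i : ℚ) • X i
  /-- crystallographic condition: `s_i(α_j) = α_j - ⟨α_j, α_i^∨⟩ α_i` with integral
  Cartan coefficients -/
  cartan : ∀ i j, ∃ n : ℤ, φ (sr i) (X j) = X j - (n : ℚ) • X i
  /-- `s_i(α_i) = -α_i` -/
  simple_neg : ∀ i, φ (sr i) (X i) = - X i
  /-- `W` permutes the set `Φ = Φ⁺ ∪ (-Φ⁺)` of all roots -/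
  perm : ∀ (w : W), ∀ a ∈ P, φ w a ∈ P ∨ -(φ w a) ∈ P
  /-- `s_i` permutes `Φ⁺ \ {α_i}` -/
  simple_perm : ∀ i, ∀ a ∈ P, a ≠ X i → φ (sr i) a ∈ P
  /-- the root system is reduced -/
  reduced : ∀ a ∈ P, ∀ q : ℚ, q • a ∈ P → q = 1
  /-- reflections are involutions -/
  ref_invol : ∀ a ∈ P, ref a * ref a = 1
  /-- the reflection of a root `a` sends `a` to `-a` -/
  ref_neg : ∀ a ∈ P, φ (ref a) a = -a
  /-- the reflection of a root `a` is the identity modulo `a` -/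
  ref_div : ∀ a ∈ P, ∀ f : S ι, a ∣ (φ (ref a) f - f)
  /-- the reflection of a simple root is the corresponding simple reflection -/
  ref_simple : ∀ i, ref (X i) = sr i

/-- The (special/opposite, twisted) Schubert class `σ_w = Y_{R(w⁻¹)} • [w₀]` attached to a
choice `R` of reduced words. -/
def sigma (φ : W →* (S ι ≃ₐ[ℚ] S ι)) (sr : ι → W) (P : Finset (S ι)) (w0 : W)
    (R : W → List ι) (w : W) : W → Q ι :=
  heckeWord φ sr (R w⁻¹) (fixedPt φ P w0)

end RootCtx

namespace RootCtx

open MvPolynomial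
set_option linter.unusedSectionVars false
set_option maxHeartbeats 1000000

section Aux

variable {ι : Type} [Fintype ι]

/-- linear forms: elements of the span of the variables -/
def Lin {ι : Type} (a : S ι) : Prop := a ∈ Submodule.span ℚ (Set.range (X : ι → S ι))

lemma lin_exists {a : S ι} (h : Lin a) : ∃ c : ι → ℚ, ∑ i, c i • X i = a :=
  (Submodule.mem_span_range_iff_exists_fun ℚ).mp h

lemma lin_of_coeffs (c : ι → ℚ) : Lin (∑ i, c i • (X i : S ι)) :=
  Submodule.sum_mem _ fun i _ => Submodule.smul_mem _ _ (Submodule.subset_span ⟨i, rfl⟩)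

lemma Lin.isHomog {a : S ι} (h : Lin a) : a.IsHomogeneous 1 := by
  induction h using Submodule.span_induction with
  | mem x hx => obtain ⟨i, rfl⟩ := hx; exact isHomogeneous_X ℚ i
  | zero => exact isHomogeneous_zero _ _ _
  | add x y _ _ hx hy => exact hx.add hy
  | smul q x _ hx => rw [smul_eq_C_mul]; exact hx.C_mul q

lemma Lin.add {a b : S ι} (ha : Lin a) (hb : Lin b) : Lin (a + b) := Submodule.add_mem _ ha hb
lemma Lin.sub {a b : S ι} (ha : Lin a) (hb : Lin b) : Lin (a - b) := Submodule.sub_mem _ ha hb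
lemma Lin.neg {a : S ι} (ha : Lin a) : Lin (-a) := Submodule.neg_mem _ ha
lemma Lin.smul (q : ℚ) {a : S ι} (ha : Lin a) : Lin (q • a) := Submodule.smul_mem _ _ ha
lemma lin_X (i : ι) : Lin (X i : S ι) := Submodule.subset_span ⟨i, rfl⟩

lemma mv_prime_X (i : ι) : Prime (X i : S ι) := by
  classical
  let e1 := renameEquiv ℚ (Equiv.optionSubtypeNe i).symm
  let e2 := optionEquivLeft ℚ {b : ι // b ≠ i}
  have h : Prime ((e1.trans e2).toMulEquiv (X i)) := by
    have : (e1.trans e2).toMulEquiv (X i) = Polynomial.X := by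
      simp [e1, e2, renameEquiv_apply, rename_X, Equiv.optionSubtypeNe_symm_self,
        optionEquivLeft_X_none]
    rw [this]; exact Polynomial.prime_X
  exact (MulEquiv.prime_iff (e1.trans e2).toMulEquiv).mp h

lemma prime_of_lin {a : S ι} (hlin : Lin a) (ha0 : a ≠ 0) : Prime a := by
  classical
  obtain ⟨c, hc⟩ := lin_exists hlin
  have hex : ∃ i, c i ≠ 0 := by
    by_contra h
    push_neg at h
    exact ha0 (by rw [← hc]; simp [h])
  obtain ⟨i₀, hi₀⟩ := hex
  set u : ι → S ι := fun j => if j = i₀ then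
      (c i₀)⁻¹ • (X i₀ - ∑ k ∈ Finset.univ.erase i₀, c k • X k) else X j with hu
  set uinv : ι → S ι := fun j => if j = i₀ then a else X j with huinv
  have hsplit : a = c i₀ • X i₀ + ∑ k ∈ Finset.univ.erase i₀, c k • (X k : S ι) := by
    rw [← hc, ← Finset.add_sum_erase _ _ (Finset.mem_univ i₀)]
  have h1 : (aeval u : S ι →ₐ[ℚ] S ι) a = X i₀ := by
    rw [hsplit, map_add, map_smul, map_sum]
    have e1 : (aeval u : S ι →ₐ[ℚ] S ι) (X i₀) = u i₀ := by simp
    have e2 : ∀ k ∈ Finset.univ.erase i₀,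
        (aeval u : S ι →ₐ[ℚ] S ι) (c k • X k) = c k • (X k : S ι) := by
      intro k hk
      rw [map_smul, aeval_X]
      simp [u, Finset.ne_of_mem_erase hk]
    rw [Finset.sum_congr rfl e2, e1]
    simp only [u, if_pos rfl]
    rw [smul_smul, mul_inv_cancel₀ hi₀, one_smul, sub_add_cancel]
  have h2 : (aeval uinv : S ι →ₐ[ℚ] S ι) (u i₀) = X i₀ := by
    simp only [u, if_pos rfl]
    rw [map_smul, map_sub, aeval_X]
    simp only [uinv, if_pos rfl]
    have e2 : (aeval uinv : S ι →ₐ[ℚ] S ι) (∑ k ∈ Finset.univ.erase i₀, c k • X k)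
        = ∑ k ∈ Finset.univ.erase i₀, c k • (X k : S ι) := by
      rw [map_sum]
      refine Finset.sum_congr rfl fun k hk => ?_
      rw [map_smul, aeval_X]
      simp [uinv, Finset.ne_of_mem_erase hk]
    rw [e2, hsplit]
    rw [add_sub_cancel_right, smul_smul, inv_mul_cancel₀ hi₀, one_smul]
  have comp1 : (aeval u : S ι →ₐ[ℚ] S ι).comp (aeval uinv) = AlgHom.id ℚ (S ι) := by
    apply MvPolynomial.algHom_ext
    intro j
    by_cases hj : j = i₀
    · subst hj
      simp only [AlgHom.comp_apply, aeval_X, AlgHom.id_apply]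
      simp only [uinv, if_pos rfl]
      exact h1
    · simp [AlgHom.comp_apply, uinv, u, hj]
  have comp2 : (aeval uinv : S ι →ₐ[ℚ] S ι).comp (aeval u) = AlgHom.id ℚ (S ι) := by
    apply MvPolynomial.algHom_ext
    intro j
    by_cases hj : j = i₀
    · subst hj
      simp only [AlgHom.comp_apply, aeval_X, AlgHom.id_apply]
      exact h2
    · simp [AlgHom.comp_apply, uinv, u, hj]
  let E : S ι ≃ₐ[ℚ] S ι := AlgEquiv.ofAlgHom (aeval u) (aeval uinv) comp1 comp2
  have hEa : E.toMulEquiv a = X i₀ := h1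
  rw [← MulEquiv.prime_iff E.toMulEquiv, hEa]
  exact mv_prime_X i₀

lemma divHomog {a h : S ι} {n : ℕ} (ha : a.IsHomogeneous 1) (ha0 : a ≠ 0)
    (hp : (a * h).IsHomogeneous (n + 1)) : h.IsHomogeneous n := by
  classical
  have hcomp : ∀ k : ℕ, k ≠ n → homogeneousComponent k h = 0 := by
    intro k hk
    have hmem : ∀ j : ℕ, a * homogeneousComponent j h ∈ homogeneousSubmodule ι ℚ (1 + j) :=
      fun j => (mem_homogeneousSubmodule _ _).mpr (ha.mul (homogeneousComponent_isHomogeneous j h))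
    have hsum : a * h = ∑ j ∈ Finset.range (h.totalDegree + 1), a * homogeneousComponent j h := by
      rw [← Finset.mul_sum, sum_homogeneousComponent]
    have hc1 : homogeneousComponent (1 + k) (a * h) = 0 := by
      rw [homogeneousComponent_of_mem ((mem_homogeneousSubmodule _ _).mpr hp)]
      rw [if_neg (by omega)]
    have hc2 : homogeneousComponent (1 + k) (a * h)
        = if k ∈ Finset.range (h.totalDegree + 1) then a * homogeneousComponent k h else 0 := by
      rw [hsum, map_sum]
      rw [Finset.sum_congr rfl (fun j (_ : j ∈ _) => homogeneousComponent_of_mem (hmem j))]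
      by_cases hk' : k ∈ Finset.range (h.totalDegree + 1)
      · rw [Finset.sum_eq_single k]
        · rw [if_pos rfl, if_pos hk']
        · intro j _ hj; rw [if_neg (by omega)]
        · intro hnk; exact absurd hk' hnk
      · rw [if_neg hk', Finset.sum_eq_zero]
        intro j hj
        rw [if_neg]
        intro hjk
        have : j = k := by omega
        exact hk' (this ▸ hj)
    by_cases hk' : k ∈ Finset.range (h.totalDegree + 1)
    · rw [hc1, if_pos hk'] at hc2
      rcases mul_eq_zero.mp hc2.symm with h' | h'
      · exact absurd h' ha0
      · exact h'
    · apply homogeneousComponent_eq_zero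
      simp at hk'
      omega
  have hh : h = homogeneousComponent n h := by
    conv_lhs => rw [← sum_homogeneousComponent h]
    rw [Finset.sum_eq_single n (fun j _ hj => hcomp j hj)]
    intro hn
    apply homogeneousComponent_eq_zero
    simp at hn
    omega
  rw [hh]
  exact homogeneousComponent_isHomogeneous n h

lemma homog0_eq_C {p : S ι} (h : p.IsHomogeneous 0) : p = C (coeff 0 p) := by
  have := homogeneousComponent_of_mem (mem_homogeneousSubmodule 0 p |>.mpr h) (m := 0)
  simp at this
  exact this.symm

end Aux


/-- The inversion set of `w`, as a finset. -/
def NegF {ι : Type} [Fintype ι] {W : Type} [Group W] (φ : W →* (S ι ≃ₐ[ℚ] S ι))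
    (P : Finset (S ι)) (w : W) : Finset (S ι) :=
  P.filter fun a => -(φ w a) ∈ P


section Ctx

variable {ι : Type} [Fintype ι] {W : Type} [Group W] [Fintype W]
variable {φ : W →* (S ι ≃ₐ[ℚ] S ι)} {ψ : W →* RingAut (Q ι)}
variable {sr : ι → W} {ref : S ι → W} {P : Finset (S ι)}
variable (hctx : IsRootCtx φ ψ sr ref P)

lemma phi_mul_apply (u v : W) (p : S ι) : φ (u * v) p = φ u (φ v p) := by
  rw [map_mul, AlgEquiv.mul_apply]

lemma phi_one_apply (p : S ι) : φ 1 p = p := by rw [map_one, AlgEquiv.one_apply]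

lemma phi_cancel (w : W) (p : S ι) : φ w (φ w⁻¹ p) = p := by
  rw [← phi_mul_apply, mul_inv_cancel, phi_one_apply]

lemma phi_cancel' (w : W) (p : S ι) : φ w⁻¹ (φ w p) = p := by
  rw [← phi_mul_apply, inv_mul_cancel, phi_one_apply]

lemma phi_inj {w : W} {p q : S ι} (h : φ w p = φ w q) : p = q := by
  have := congrArg (φ w⁻¹) h
  rwa [phi_cancel', phi_cancel'] at this

lemma phi_ne_zero (w : W) {p : S ι} (hp : p ≠ 0) : φ w p ≠ 0 := by
  intro h
  exact hp (phi_inj (φ := φ) (by rw [h, map_zero]))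

include hctx

lemma sr_sq (i : ι) : sr i * sr i = 1 := by
  rw [← hctx.ref_simple i]; exact hctx.ref_invol _ (hctx.simple_mem i)

lemma sr_inv (i : ι) : (sr i)⁻¹ = sr i := inv_eq_of_mul_eq_one_right (sr_sq hctx i)

lemma not_neg_mem {a : S ι} (ha : a ∈ P) : -a ∉ P := by
  intro hna
  have := hctx.reduced (-a) hna (-1) (by rw [neg_one_smul, neg_neg]; exact ha)
  norm_num at this

lemma ne_zero_of_mem {a : S ι} (ha : a ∈ P) : a ≠ 0 := fun h => hctx.zero_not_mem (h ▸ ha)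

lemma lin_of_mem {a : S ι} (ha : a ∈ P) : Lin a := by
  obtain ⟨c, hc⟩ := hctx.pos_nat a ha
  rw [hc]
  exact lin_of_coeffs _

lemma prime_of_mem {a : S ι} (ha : a ∈ P) : Prime a :=
  prime_of_lin (lin_of_mem hctx ha) (ne_zero_of_mem hctx ha)

lemma posneg (w : W) {a : S ι} (ha : a ∈ P) :
    (φ w a ∈ P ∧ -(φ w a) ∉ P) ∨ (-(φ w a) ∈ P ∧ φ w a ∉ P) := by
  rcases hctx.perm w a ha with h | h
  · exact Or.inl ⟨h, not_neg_mem hctx h⟩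
  · exact Or.inr ⟨h, fun h' => not_neg_mem hctx h' h⟩

omit hctx in
lemma lin_stab {x : W} (hx : ∀ j, Lin (φ x (X j))) {q : S ι} (hq : Lin q) : Lin (φ x q) := by
  induction hq using Submodule.span_induction with
  | mem y hy => obtain ⟨j, rfl⟩ := hy; exact hx j
  | zero => rw [map_zero]; exact Submodule.zero_mem _
  | add a b _ _ ha hb => rw [map_add]; exact ha.add hb
  | smul r a _ ha => rw [map_smul]; exact ha.smul r

lemma lin_phi (w : W) (j : ι) : Lin (φ w (X j)) := by
  suffices h : ∀ w : W, (∀ j, Lin (φ w (X j))) ∧ (∀ j, Lin (φ w⁻¹ (X j))) from (h w).1 j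
  intro w
  have hgen : ∀ i j, Lin (φ (sr i) (X j)) := by
    intro i j
    obtain ⟨n, hn⟩ := hctx.cartan i j
    rw [hn]
    exact (lin_X j).sub ((lin_X i).smul _)
  have hw : w ∈ Subgroup.closure (Set.range sr) := by rw [hctx.gen]; trivial
  induction hw using Subgroup.closure_induction with
  | mem x hx =>
    obtain ⟨i, rfl⟩ := hx
    exact ⟨hgen i, by rw [sr_inv hctx]; exact hgen i⟩
  | one =>
    constructor <;> intro j
    · rw [phi_one_apply]; exact lin_X j
    · rw [inv_one, phi_one_apply]; exact lin_X j
  | mul x y _ _ hx hy =>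
    constructor <;> intro j
    · rw [phi_mul_apply]; exact lin_stab hx.1 (hy.1 j)
    · rw [mul_inv_rev, phi_mul_apply]; exact lin_stab hy.2 (hx.2 j)
  | inv x _ hx =>
    refine ⟨hx.2, ?_⟩
    rw [inv_inv]
    exact hx.1

lemma fix_of_dvd {a : S ι} (ha : a ∈ P) {k : W} (hfix : φ k a = a)
    (hdvd : ∀ f : S ι, a ∣ φ k f - f) : k = 1 := by
  have key : ∀ j, φ k (X j) = X j := by
    intro j
    obtain ⟨h, hh⟩ := hdvd (X j)
    have hlin : (a * h).IsHomogeneous 1 := by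
      rw [← hh]
      exact ((lin_phi hctx k j).sub (lin_X j)).isHomog
    have h0 : h.IsHomogeneous 0 :=
      divHomog (lin_of_mem hctx ha).isHomog (ne_zero_of_mem hctx ha) (by simpa using hlin)
    set q := coeff 0 h with hqdef
    have hC : h = C q := homog0_eq_C h0
    have hkj : φ k (X j) = X j + q • a := by
      have h2 : φ k (X j) - X j = q • a := by
        rw [hh, hC, smul_eq_C_mul, mul_comm]
      rw [sub_eq_iff_eq_add'] at h2
      exact h2
    have hpow : ∀ m : ℕ, φ (k ^ m) (X j) = X j + ((m : ℚ) * q) • a := by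
      intro m
      induction m with
      | zero => rw [pow_zero, phi_one_apply]; norm_num
      | succ m ih =>
        rw [pow_succ', phi_mul_apply, ih, map_add, map_smul, hkj, hfix]
        push_cast
        module
    have hord := hpow (orderOf k)
    rw [pow_orderOf_eq_one, phi_one_apply, left_eq_add, smul_eq_C_mul] at hord
    have hq0 : q = 0 := by
      rcases mul_eq_zero.mp hord with h' | h'
      · have h2 : ((orderOf k : ℚ)) * q = 0 := by
          rwa [MvPolynomial.C_eq_zero] at h'
        have hk0 : (orderOf k : ℚ) ≠ 0 := by
          have := orderOf_pos k
          positivity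
        rcases mul_eq_zero.mp h2 with h'' | h''
        · exact absurd h'' hk0
        · exact h''
      · exact absurd h' (ne_zero_of_mem hctx ha)
    rw [hkj, hq0, zero_smul, add_zero]
  apply hctx.faithful
  rw [map_one]
  apply AlgEquiv.ext
  intro p
  rw [AlgEquiv.one_apply]
  induction p using MvPolynomial.induction_on with
  | C r => rw [← MvPolynomial.algebraMap_eq]; exact (φ k).commutes r
  | add p q hp hq => rw [map_add, hp, hq]
  | mul_X p j hp => rw [map_mul, hp, key j]

lemma ref_unique {a : S ι} (ha : a ∈ P) {g : W} (hneg : φ g a = -a)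
    (hdvd : ∀ f : S ι, a ∣ φ g f - f) : g = ref a := by
  have h1 : φ (ref a * g) a = a := by
    rw [phi_mul_apply, hneg, map_neg, hctx.ref_neg a ha, neg_neg]
  have h2 : ∀ f, a ∣ φ (ref a * g) f - f := by
    intro f
    have heq : φ (ref a * g) f - f = (φ (ref a) (φ g f) - φ g f) + (φ g f - f) := by
      rw [phi_mul_apply]; ring
    rw [heq]
    exact dvd_add (hctx.ref_div a ha _) (hdvd f)
  have h3 := fix_of_dvd hctx ha h1 h2
  have hinv : (ref a)⁻¹ = ref a := inv_eq_of_mul_eq_one_right (hctx.ref_invol a ha)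
  calc g = (ref a)⁻¹ * (ref a * g) := by group
  _ = (ref a)⁻¹ := by rw [h3, mul_one]
  _ = ref a := hinv

lemma conj_ref (v : W) (i : ι) {b : S ι} (hb : b ∈ P)
    (hcase : φ v (X i) = b ∨ φ v (X i) = -b) : v * sr i * v⁻¹ = ref b := by
  have hXi : ∀ p, φ (v * sr i * v⁻¹) (φ v p) = φ v (φ (sr i) p) := by
    intro p
    rw [← phi_mul_apply, ← phi_mul_apply]
    congr 2
    group
  apply ref_unique hctx hb
  · rcases hcase with h | h
    · rw [← h, hXi, hctx.simple_neg, map_neg, h]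
    · have key : φ (v * sr i * v⁻¹) (φ v (X i)) = -(φ v (X i)) := by
        rw [hXi, hctx.simple_neg, map_neg]
      have hb2 : b = -(φ v (X i)) := by rw [h, neg_neg]
      rw [hb2, map_neg, key]
  · intro f
    have heq : φ (v * sr i * v⁻¹) f - f = φ v (φ (sr i) (φ v⁻¹ f) - φ v⁻¹ f) := by
      rw [map_sub, ← phi_mul_apply, ← phi_mul_apply, phi_cancel]
      try congr 2
      try group
    rw [heq]
    have hXdvd : X i ∣ φ (sr i) (φ v⁻¹ f) - φ v⁻¹ f := by
      have h := hctx.ref_div (X i) (hctx.simple_mem i) (φ v⁻¹ f)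
      rwa [hctx.ref_simple i] at h
    have hmap : φ v (X i) ∣ φ v (φ (sr i) (φ v⁻¹ f) - φ v⁻¹ f) := map_dvd _ hXdvd
    rcases hcase with h | h
    · rwa [h] at hmap
    · rw [h] at hmap
      exact (neg_dvd).mp hmap

lemma edge_dvd {zh : W → S ι} (hZ : inZ ref P zh) (v : W) (i : ι) :
    φ v (X i) ∣ zh (v * sr i) - zh v := by
  have hgrp : ∀ g : W, g = v * sr i * v⁻¹ → g * v = v * sr i := by
    intro g hg; rw [hg]; group
  rcases posneg hctx v (hctx.simple_mem i) with ⟨hb, _⟩ | ⟨hb, _⟩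
  · have hr := conj_ref hctx v i hb (Or.inl rfl)
    have h := hZ _ hb v
    rwa [← hr, hgrp _ rfl] at h
  · have hr := conj_ref hctx v i hb (Or.inr (by rw [neg_neg]))
    have h := hZ _ hb v
    rw [← hr, hgrp _ rfl] at h
    exact (neg_dvd).mp h


omit hctx in
lemma AM_inj : Function.Injective (algebraMap (S ι) (Q ι)) :=
  IsFractionRing.injective _ _

omit hctx in
lemma AM_ne_zero {p : S ι} (hp : p ≠ 0) : algebraMap (S ι) (Q ι) p ≠ 0 := by
  intro h
  exact hp (AM_inj (by rw [h, map_zero]))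

lemma hecke_step (i : ι) (d : ℕ) (z : W → Q ι) (zh : W → S ι)
    (hz : ∀ v, z v = algebraMap (S ι) (Q ι) (zh v))
    (hZ : inZ ref P zh) (hh : ∀ v, (zh v).IsHomogeneous (d + 1)) :
    ∃ zh' : W → S ι, (∀ v, hecke φ sr i z v = algebraMap (S ι) (Q ι) (zh' v)) ∧
      inZ ref P zh' ∧ (∀ v, (zh' v).IsHomogeneous d) := by
  have hdvd : ∀ v, φ v (X i) ∣ zh (v * sr i) - zh v := fun v => edge_dvd hctx hZ v i
  choose zh' hspec using hdvd
  refine ⟨zh', ?_, ?_, ?_⟩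
  · intro v
    have hc0 : algebraMap (S ι) (Q ι) (φ v (X i)) ≠ 0 :=
      AM_ne_zero (phi_ne_zero v (X_ne_zero i))
    have : hecke φ sr i z v
        = (z (v * sr i) - z v) / algebraMap (S ι) (Q ι) (φ v (X i)) := rfl
    rw [this, hz, hz, ← map_sub, hspec v, map_mul,
      mul_div_cancel_left₀ _ hc0]
  · intro a ha w
    by_cases hc : a ∣ φ w (X i)
    · -- degenerate case: φ w (X i) = ± a
      obtain ⟨h, hh'⟩ := hc
      have hhom : (a * h).IsHomogeneous 1 := by
        rw [← hh']; exact (lin_phi hctx w i).isHomog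
      have h0 : h.IsHomogeneous 0 :=
        divHomog (lin_of_mem hctx ha).isHomog (ne_zero_of_mem hctx ha) (by simpa using hhom)
      set q := coeff 0 h with hqdef
      have hCq : h = C q := homog0_eq_C h0
      have hsm : φ w (X i) = q • a := by
        rw [hh', hCq, smul_eq_C_mul, mul_comm]
      have hcases : φ w (X i) = a ∨ φ w (X i) = -a := by
        rcases posneg hctx w (hctx.simple_mem i) with ⟨hp, _⟩ | ⟨hp, _⟩
        · left
          have h1 := hctx.reduced a ha q (by rw [← hsm]; exact hp)
          rw [hsm, h1, one_smul]
        · right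
          have h1 := hctx.reduced a ha (-q) (by rw [neg_smul, ← hsm]; exact hp)
          have hq : q = -1 := by linarith
          rw [hsm, hq, neg_one_smul]
      have hre : w * sr i * w⁻¹ = ref a := conj_ref hctx w i ha hcases
      have htw : ref a * w = w * sr i := by rw [← hre]; group
      have hd1 := hspec (w * sr i)
      have hd2 := hspec w
      have hws : w * sr i * sr i = w := by rw [mul_assoc, sr_sq hctx, mul_one]
      have hphiws : φ (w * sr i) (X i) = -(φ w (X i)) := by
        rw [phi_mul_apply, hctx.simple_neg, map_neg]
      rw [hws, hphiws] at hd1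
      have hc0 : φ w (X i) ≠ 0 := phi_ne_zero w (X_ne_zero i)
      have hzz : zh' (w * sr i) = zh' w := by
        have hsum : φ w (X i) * (zh' (w * sr i) - zh' w) = 0 := by
          linear_combination hd1 + hd2
        rcases mul_eq_zero.mp hsum with h' | h'
        · exact absurd h' hc0
        · exact sub_eq_zero.mp h'
      rw [htw, hzz, sub_self]
      exact dvd_zero a
    · -- main case
      have hd2 := hspec w
      have hcc : φ (ref a * w) (X i) = φ (ref a) (φ w (X i)) := phi_mul_apply _ _ _
      have k1 : a ∣ φ (ref a) (φ w (X i)) - φ w (X i) := hctx.ref_div a ha _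
      have k2 : a ∣ zh (ref a * (w * sr i)) - zh (w * sr i) := hZ a ha (w * sr i)
      have k3 : a ∣ zh (ref a * w) - zh w := hZ a ha w
      have hassoc : ref a * w * sr i = ref a * (w * sr i) := by group
      have e1 : φ (ref a) (φ w (X i)) * zh' (ref a * w)
          = zh (ref a * (w * sr i)) - zh (ref a * w) := by
        rw [← hcc, ← hassoc]
        exact (hspec (ref a * w)).symm
      have key : φ w (X i) * (zh' (ref a * w) - zh' w)
          = (φ w (X i) - φ (ref a) (φ w (X i))) * zh' (ref a * w)
            + ((zh (ref a * (w * sr i)) - zh (w * sr i)) - (zh (ref a * w) - zh w)) := by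
        linear_combination e1 + hd2
      have hdvd2 : a ∣ φ w (X i) * (zh' (ref a * w) - zh' w) := by
        rw [key]
        exact dvd_add (Dvd.dvd.mul_right (dvd_sub_comm.mp k1) _) (dvd_sub k2 k3)
      exact ((prime_of_mem hctx ha).dvd_or_dvd hdvd2).resolve_left hc
  · intro v
    have hhom : (φ v (X i) * zh' v).IsHomogeneous (d + 1) := by
      rw [← hspec v]
      exact (hh _).sub (hh _)
    exact divHomog (lin_phi hctx v i).isHomog (phi_ne_zero v (X_ne_zero i)) hhom

lemma hecke_iter : ∀ (l : List ι) (d : ℕ) (z : W → Q ι) (zh : W → S ι),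
    (∀ v, z v = algebraMap (S ι) (Q ι) (zh v)) → inZ ref P zh →
    (∀ v, (zh v).IsHomogeneous (d + l.length)) →
    ∃ zh' : W → S ι, (∀ v, heckeWord φ sr l z v = algebraMap (S ι) (Q ι) (zh' v)) ∧
      inZ ref P zh' ∧ (∀ v, (zh' v).IsHomogeneous d) := by
  intro l
  induction l with
  | nil => exact fun d z zh h1 h2 h3 => ⟨zh, h1, h2, by simpa using h3⟩
  | cons i t ih =>
    intro d z zh h1 h2 h3
    have hlen : d + (i :: t).length = (d + 1) + t.length := by
      simp only [List.length_cons]; omega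
    obtain ⟨zt, ht1, ht2, ht3⟩ := ih (d + 1) z zh h1 h2 (fun v => by rw [← hlen]; exact h3 v)
    obtain ⟨zf, hf1, hf2, hf3⟩ := hecke_step hctx i d _ zt ht1 ht2 ht3
    exact ⟨zf, fun v => by simpa [heckeWord] using hf1 v, hf2, hf3⟩

omit hctx in
lemma mem_negF {w : W} {a : S ι} : a ∈ NegF φ P w ↔ a ∈ P ∧ -(φ w a) ∈ P := by
  simp [NegF]

omit hctx in
lemma len_eq_negF (w : W) : len φ P w = (NegF φ P w).card := by
  rw [len]
  have h : {a : S ι | a ∈ P ∧ -(φ w a) ∈ P} = ↑(NegF φ P w) := by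
    ext a; simp [NegF]
  rw [h, Set.ncard_coe_finset]

lemma negF_one : NegF φ P (1 : W) = ∅ := by
  apply Finset.filter_false_of_mem
  intro a ha
  rw [phi_one_apply]
  exact not_neg_mem hctx ha

lemma flip_iff (i : ι) {p : S ι} (hp : p ∈ P) : -(φ (sr i) p) ∈ P ↔ p = X i := by
  constructor
  · intro h
    by_contra hne
    exact not_neg_mem hctx (hctx.simple_perm i p hp hne) h
  · rintro rfl
    rw [hctx.simple_neg, neg_neg]
    exact hctx.simple_mem i

lemma negF_cons_pos {w : W} (i : ι) (hγ : φ w⁻¹ (X i) ∈ P) :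
    NegF φ P (sr i * w) = insert (φ w⁻¹ (X i)) (NegF φ P w) ∧
      φ w⁻¹ (X i) ∉ NegF φ P w := by
  have hγnot : φ w⁻¹ (X i) ∉ NegF φ P w := by
    rw [mem_negF]
    rintro ⟨-, h2⟩
    rw [phi_cancel] at h2
    exact not_neg_mem hctx (hctx.simple_mem i) h2
  refine ⟨?_, hγnot⟩
  ext a
  rw [Finset.mem_insert, mem_negF, mem_negF]
  constructor
  · rintro ⟨ha, hneg⟩
    rw [phi_mul_apply] at hneg
    rcases posneg hctx w ha with ⟨hp, hnp⟩ | ⟨hnp, hp⟩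
    · left
      have h1 := (flip_iff hctx i hp).mp hneg
      rw [← h1, phi_cancel']
    · exact Or.inr ⟨ha, hnp⟩
  · rintro (rfl | ⟨ha, hneg⟩)
    · refine ⟨hγ, ?_⟩
      rw [phi_mul_apply, phi_cancel]
      exact (flip_iff hctx i (hctx.simple_mem i)).mpr rfl
    · refine ⟨ha, ?_⟩
      rw [phi_mul_apply]
      by_cases hXi : -(φ w a) = X i
      · exfalso
        have h2 := congrArg (φ w⁻¹) hXi
        rw [map_neg, phi_cancel'] at h2
        have h3 : a = -(φ w⁻¹ (X i)) := by rw [← h2, neg_neg]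
        rw [h3] at ha
        exact not_neg_mem hctx hγ ha
      · have h4 := hctx.simple_perm i _ hneg hXi
        rwa [map_neg] at h4

lemma negF_cons_neg {w : W} (i : ι) (hγ : -(φ w⁻¹ (X i)) ∈ P) :
    NegF φ P (sr i * w) = (NegF φ P w).erase (-(φ w⁻¹ (X i))) ∧
      -(φ w⁻¹ (X i)) ∈ NegF φ P w := by
  have hmem : -(φ w⁻¹ (X i)) ∈ NegF φ P w := by
    rw [mem_negF]
    refine ⟨hγ, ?_⟩
    rw [map_neg, phi_cancel, neg_neg]
    exact hctx.simple_mem i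
  refine ⟨?_, hmem⟩
  ext a
  rw [Finset.mem_erase, mem_negF, mem_negF]
  constructor
  · rintro ⟨ha, hneg⟩
    rw [phi_mul_apply] at hneg
    rcases posneg hctx w ha with ⟨hp, hnp⟩ | ⟨hnp, hp⟩
    · exfalso
      have h1 := (flip_iff hctx i hp).mp hneg
      have h2 : a = φ w⁻¹ (X i) := by rw [← h1, phi_cancel']
      rw [← h2] at hγ
      exact not_neg_mem hctx ha hγ
    · refine ⟨?_, ha, hnp⟩
      intro hEq
      have h3 : φ w a = -(X i) := by
        rw [hEq, map_neg, phi_cancel]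
      rw [h3, map_neg, neg_neg, hctx.simple_neg] at hneg
      exact not_neg_mem hctx (hctx.simple_mem i) hneg
  · rintro ⟨hne, ha, hneg⟩
    refine ⟨ha, ?_⟩
    rw [phi_mul_apply]
    have hXi : -(φ w a) ≠ X i := by
      intro hEq
      apply hne
      have h2 := congrArg (φ w⁻¹) hEq
      rw [map_neg, phi_cancel'] at h2
      rw [← h2, neg_neg]
    have h4 := hctx.simple_perm i _ hneg hXi
    rwa [map_neg] at h4

lemma len_ge_pred (i : ι) (w : W) :
    (NegF φ P w).card ≤ (NegF φ P (sr i * w)).card + 1 := by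
  rcases posneg hctx w⁻¹ (hctx.simple_mem i) with ⟨hp, _⟩ | ⟨hp, _⟩
  · obtain ⟨he, hn⟩ := negF_cons_pos hctx i hp
    rw [he, Finset.card_insert_of_notMem hn]
    omega
  · obtain ⟨he, hm⟩ := negF_cons_neg hctx i hp
    rw [he, Finset.card_erase_of_mem hm]
    omega

lemma len_le_succ (i : ι) (w : W) :
    (NegF φ P (sr i * w)).card ≤ (NegF φ P w).card + 1 := by
  rcases posneg hctx w⁻¹ (hctx.simple_mem i) with ⟨hp, _⟩ | ⟨hp, _⟩
  · obtain ⟨he, hn⟩ := negF_cons_pos hctx i hp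
    rw [he, Finset.card_insert_of_notMem hn]
  · obtain ⟨he, hm⟩ := negF_cons_neg hctx i hp
    rw [he, Finset.card_erase_of_mem hm]
    omega

lemma lenle : ∀ l : List ι, (NegF φ P ((l.map sr).prod)).card ≤ l.length := by
  intro l
  induction l with
  | nil => simp [negF_one hctx]
  | cons i t ih =>
    rw [List.map_cons, List.prod_cons]
    have h := len_le_succ hctx i ((t.map sr).prod)
    simp only [List.length_cons]
    omega

lemma supp_word (u : W) : ∀ (l : List ι) (z : W → Q ι) (m : ℕ),
    (∀ v, z v ≠ 0 → (NegF φ P (v⁻¹ * u)).card ≤ m) →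
    ∀ v, heckeWord φ sr l z v ≠ 0 → (NegF φ P (v⁻¹ * u)).card ≤ m + l.length := by
  intro l
  induction l with
  | nil =>
    intro z m h v hv
    simpa using h v hv
  | cons i t ih =>
    intro z m h v hv
    have hsplit : heckeWord φ sr t z (v * sr i) ≠ 0 ∨ heckeWord φ sr t z v ≠ 0 := by
      by_contra hcon
      push_neg at hcon
      apply hv
      show (heckeWord φ sr t z (v * sr i) - heckeWord φ sr t z v) / _ = 0
      rw [hcon.1, hcon.2, sub_self, zero_div]
    rcases hsplit with h' | h'
    · have hle := ih z m h (v * sr i) h'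
      have heq : (v * sr i)⁻¹ * u = sr i * (v⁻¹ * u) := by
        rw [show (v * sr i)⁻¹ * u = (sr i)⁻¹ * (v⁻¹ * u) by group, sr_inv hctx]
      rw [heq] at hle
      have hge := len_ge_pred hctx i (v⁻¹ * u)
      simp only [List.length_cons]
      omega
    · have hle := ih z m h v h'
      simp only [List.length_cons]
      omega

lemma red_split (i : ι) (t : List ι)
    (h : (NegF φ P (sr i * (t.map sr).prod)).card = t.length + 1) :
    (NegF φ P ((t.map sr).prod)).card = t.length ∧
    φ ((t.map sr).prod)⁻¹ (X i) ∈ P ∧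
    NegF φ P (sr i * (t.map sr).prod)
      = insert (φ ((t.map sr).prod)⁻¹ (X i)) (NegF φ P ((t.map sr).prod)) ∧
    φ ((t.map sr).prod)⁻¹ (X i) ∉ NegF φ P ((t.map sr).prod) := by
  have hle := lenle hctx t
  rcases posneg hctx ((t.map sr).prod)⁻¹ (hctx.simple_mem i) with ⟨hp, _⟩ | ⟨hp, _⟩
  · obtain ⟨he, hn⟩ := negF_cons_pos hctx i hp
    have hcard : (NegF φ P (sr i * (t.map sr).prod)).card
        = (NegF φ P ((t.map sr).prod)).card + 1 := by
      rw [he, Finset.card_insert_of_notMem hn]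
    exact ⟨by omega, hp, he, hn⟩
  · exfalso
    obtain ⟨he, hm⟩ := negF_cons_neg hctx i hp
    have hpos : 0 < (NegF φ P ((t.map sr).prod)).card :=
      Finset.card_pos.mpr ⟨_, hm⟩
    have hcard : (NegF φ P (sr i * (t.map sr).prod)).card
        = (NegF φ P ((t.map sr).prod)).card - 1 := by
      rw [he, Finset.card_erase_of_mem hm]
    omega

lemma diag_value (u : W) : ∀ l : List ι,
    (NegF φ P ((l.map sr).prod)).card = l.length →
    heckeWord φ sr l (fixedPt φ P u) (u * ((l.map sr).prod)⁻¹)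
      * algebraMap (S ι) (Q ι) (φ u (∏ a ∈ NegF φ P ((l.map sr).prod), (-a)))
      = algebraMap (S ι) (Q ι) (φ u (xPi P)) := by
  intro l
  induction l with
  | nil =>
    intro _
    simp only [List.map_nil, List.prod_nil, inv_one, mul_one]
    rw [negF_one hctx]
    simp only [Finset.prod_empty, map_one]
    show fixedPt φ P u u * 1 = _
    rw [fixedPt, if_pos rfl, mul_one]
  | cons i t ih =>
    intro h
    rw [List.map_cons, List.prod_cons] at h ⊢
    simp only [List.length_cons] at h
    obtain ⟨hlt, hγ, hNeg, hγnot⟩ := red_split hctx i t h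
    have hpt : u * (sr i * (t.map sr).prod)⁻¹ = u * ((t.map sr).prod)⁻¹ * sr i := by
      rw [show (sr i * (t.map sr).prod)⁻¹ = ((t.map sr).prod)⁻¹ * (sr i)⁻¹ by group,
        sr_inv hctx, mul_assoc]
    have hpt2 : (u * ((t.map sr).prod)⁻¹ * sr i) * sr i = u * ((t.map sr).prod)⁻¹ := by
      rw [mul_assoc, sr_sq hctx, mul_one]
    have hZzero : heckeWord φ sr t (fixedPt φ P u) (u * ((t.map sr).prod)⁻¹ * sr i) = 0 := by
      by_contra hne
      have hbase : ∀ v, fixedPt φ P u v ≠ 0 → (NegF φ P (v⁻¹ * u)).card ≤ 0 := by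
        intro v hv
        have hvu : v = u := by
          by_contra hvu
          exact hv (by rw [fixedPt, if_neg hvu])
        rw [hvu, inv_mul_cancel, negF_one hctx]
        simp
      have hsup := supp_word hctx u t (fixedPt φ P u) 0 hbase _ hne
      rw [show (u * ((t.map sr).prod)⁻¹ * sr i)⁻¹ * u = (sr i)⁻¹ * (t.map sr).prod by group,
        sr_inv hctx, h] at hsup
      omega
    have hden : φ (u * ((t.map sr).prod)⁻¹ * sr i) (X i)
        = -(φ u (φ ((t.map sr).prod)⁻¹ (X i))) := by
      rw [phi_mul_apply, hctx.simple_neg, map_neg, phi_mul_apply]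
    have hstep : heckeWord φ sr (i :: t) (fixedPt φ P u) (u * (sr i * (t.map sr).prod)⁻¹)
        = heckeWord φ sr t (fixedPt φ P u) (u * ((t.map sr).prod)⁻¹)
          / algebraMap (S ι) (Q ι) (-(φ u (φ ((t.map sr).prod)⁻¹ (X i)))) := by
      rw [hpt]
      show (heckeWord φ sr t (fixedPt φ P u) ((u * ((t.map sr).prod)⁻¹ * sr i) * sr i)
          - heckeWord φ sr t (fixedPt φ P u) (u * ((t.map sr).prod)⁻¹ * sr i))
          / algebraMap (S ι) (Q ι) (φ (u * ((t.map sr).prod)⁻¹ * sr i) (X i)) = _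
      rw [hpt2, hZzero, hden, sub_zero]
    rw [hstep, hNeg, Finset.prod_insert hγnot, map_mul, map_mul]
    have hne0 : algebraMap (S ι) (Q ι) (-(φ u (φ ((t.map sr).prod)⁻¹ (X i)))) ≠ 0 :=
      AM_ne_zero (neg_ne_zero.mpr (phi_ne_zero u (ne_zero_of_mem hctx hγ)))
    rw [show φ u (-(φ ((t.map sr).prod)⁻¹ (X i))) = -(φ u (φ ((t.map sr).prod)⁻¹ (X i)))
      from map_neg _ _]
    rw [show ∀ (x y z : Q ι), x ≠ 0 → y / x * (x * z) = y * z from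
      fun x y z hx => by field_simp]
    · exact ih hlt
    · exact hne0

lemma negF_w0 (w0 : W) (hw0 : ∀ a ∈ P, -(φ w0 a) ∈ P) : NegF φ P w0 = P :=
  Finset.filter_true_of_mem (fun a ha => hw0 a ha)

lemma phiw0_xPi (w0 : W) (hw0 : ∀ a ∈ P, -(φ w0 a) ∈ P) : φ w0 (xPi P) = ∏ a ∈ P, a := by
  have hinj : Set.InjOn (fun b => -(φ w0 b)) ↑P := by
    intro x _ y _ hxy
    simp only at hxy
    exact phi_inj (φ := φ) (neg_injective hxy)
  have himage : P.image (fun b => -(φ w0 b)) = P := by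
    apply Finset.eq_of_subset_of_card_le
    · intro x hx
      obtain ⟨b, hb, rfl⟩ := Finset.mem_image.mp hx
      exact hw0 b hb
    · rw [Finset.card_image_of_injOn hinj]
  calc φ w0 (xPi P) = ∏ b ∈ P, -(φ w0 b) := by
        rw [xPi, map_prod]
        exact Finset.prod_congr rfl fun b _ => map_neg _ _
  _ = ∏ a ∈ P.image (fun b => -(φ w0 b)), a := by
        rw [Finset.prod_image (fun x hx y hy => hinj hx hy)]
  _ = ∏ a ∈ P, a := by rw [himage]

lemma xPi_homog : (xPi P).IsHomogeneous P.card := by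
  rw [xPi]
  have h := MvPolynomial.IsHomogeneous.prod P (fun a => -a) (fun _ => 1)
    (fun a ha => ((lin_of_mem hctx ha).neg).isHomog)
  simpa using h

lemma prodP_homog : (∏ a ∈ P, a : S ι).IsHomogeneous P.card := by
  have h := MvPolynomial.IsHomogeneous.prod P (fun a => a) (fun _ => 1)
    (fun a ha => (lin_of_mem hctx ha).isHomog)
  simpa using h

lemma xPi_ne_zero : xPi P ≠ 0 := by
  rw [xPi, Finset.prod_ne_zero_iff]
  intro a ha
  exact neg_ne_zero.mpr (ne_zero_of_mem hctx ha)

lemma dvd_xPi {a : S ι} (ha : a ∈ P) : a ∣ xPi P := by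
  rw [xPi]
  exact (neg_dvd).mp (Finset.dvd_prod_of_mem (fun a => -a) ha)

omit hctx in
lemma dvd_prodP {a : S ι} (ha : a ∈ P) : a ∣ ∏ b ∈ P, b :=
  Finset.dvd_prod_of_mem _ ha

lemma refl_eq {q : W → ℚ} (hinZ : inZ ref P (fun w => C (q w)))
    {a : S ι} (ha : a ∈ P) (w : W) : q (ref a * w) = q w := by
  have h := hinZ a ha w
  simp only at h
  rw [← map_sub] at h
  by_contra hne
  have hu : IsUnit (C (q (ref a * w) - q w) : S ι) := by
    apply IsUnit.of_mul_eq_one (C (q (ref a * w) - q w)⁻¹)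
    rw [← map_mul, mul_inv_cancel₀ (sub_ne_zero.mpr hne), map_one]
  exact (prime_of_mem hctx ha).not_isUnit (isUnit_of_dvd_unit h hu)

lemma const_of_refl {q : W → ℚ} (hrefl : ∀ a ∈ P, ∀ w : W, q (ref a * w) = q w) :
    ∀ v w : W, q (v * w) = q w := by
  intro v
  have hv : v ∈ Subgroup.closure (Set.range sr) := by rw [hctx.gen]; trivial
  induction hv using Subgroup.closure_induction with
  | mem x hx =>
    obtain ⟨i, rfl⟩ := hx
    intro w
    have h := hrefl (X i) (hctx.simple_mem i) w
    rwa [hctx.ref_simple i] at h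
  | one => intro w; rw [one_mul]
  | mul x y _ _ hx hy => intro w; rw [mul_assoc, hx, hy]
  | inv x _ hx =>
    intro w
    have h2 := hx (x⁻¹ * w)
    rw [← mul_assoc, mul_inv_cancel, one_mul] at h2
    exact h2.symm

lemma main_u (w0 : W) (hw0 : ∀ a ∈ P, -(φ w0 a) ∈ P)
    (l : List ι) (hl : IsRed φ P sr l w0) (u : W)
    (hdvd : ∀ a ∈ P, a ∣ φ u (xPi P))
    (hhom : (φ u (xPi P)).IsHomogeneous P.card) :
    heckeWord φ sr l (fixedPt φ P u) = fun _ => 1 := by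
  obtain ⟨hπ, hlen⟩ := hl
  have hNw0 : NegF φ P w0 = P := negF_w0 hctx w0 hw0
  have hlenP : l.length = P.card := by rw [hlen, len_eq_negF, hNw0]
  have hz0 : ∀ v, fixedPt φ P u v
      = algebraMap (S ι) (Q ι) (if v = u then φ u (xPi P) else 0) := by
    intro v
    rw [fixedPt]
    by_cases hv : v = u <;> simp [hv]
  have hZ0 : inZ ref P (fun v => if v = u then φ u (xPi P) else 0) := by
    intro a ha w
    simp only
    by_cases h1 : ref a * w = u <;> by_cases h2 : w = u
    · rw [if_pos h1, if_pos h2, sub_self]; exact dvd_zero a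
    · rw [if_pos h1, if_neg h2, sub_zero]; exact hdvd a ha
    · rw [if_neg h1, if_pos h2, zero_sub, dvd_neg]; exact hdvd a ha
    · rw [if_neg h1, if_neg h2, sub_self]; exact dvd_zero a
  have hhom0 : ∀ v, (if v = u then φ u (xPi P) else 0).IsHomogeneous (0 + l.length) := by
    intro v
    by_cases hv : v = u
    · rw [if_pos hv, zero_add, hlenP]; exact hhom
    · rw [if_neg hv]; exact isHomogeneous_zero _ _ _
  obtain ⟨zf, hf1, hf2, hf3⟩ := hecke_iter hctx l 0 (fixedPt φ P u) _ hz0 hZ0 hhom0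
  have hfc : ∀ v, zf v = C (coeff 0 (zf v)) := fun v => homog0_eq_C (hf3 v)
  have hrefl : ∀ a ∈ P, ∀ w : W, coeff 0 (zf (ref a * w)) = coeff 0 (zf w) := by
    intro a ha w
    refine refl_eq hctx (q := fun v => coeff 0 (zf v)) ?_ ha w
    intro a' ha' w'
    have h := hf2 a' ha' w'
    simp only
    rwa [← hfc, ← hfc]
  have hconst := const_of_refl hctx (q := fun v => coeff 0 (zf v)) hrefl
  have hval := diag_value hctx u l (by rw [hπ, hNw0]; exact hlenP.symm)
  rw [hπ, hNw0] at hval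
  have hxP : (∏ a ∈ P, -a : S ι) = xPi P := rfl
  rw [hxP] at hval
  have hAne : algebraMap (S ι) (Q ι) (φ u (xPi P)) ≠ 0 :=
    AM_ne_zero (phi_ne_zero u (xPi_ne_zero hctx))
  have hone : heckeWord φ sr l (fixedPt φ P u) (u * w0⁻¹) = 1 :=
    mul_right_cancel₀ hAne (hval.trans (one_mul _).symm)
  have hC1 : (C (coeff 0 (zf (u * w0⁻¹))) : S ι) = 1 := by
    apply AM_inj
    rw [map_one, ← hfc, ← hf1]
    exact hone
  funext v
  rw [hf1 v, hfc v]
  have hq1 : coeff 0 (zf v) = coeff 0 (zf (u * w0⁻¹)) := by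
    have h2 := hconst (v * (u * w0⁻¹)⁻¹) (u * w0⁻¹)
    rwa [show v * (u * w0⁻¹)⁻¹ * (u * w0⁻¹) = v by group] at h2
  rw [hq1, hC1, map_one]

end Ctx

/-- For every reduced word `I` of the longest element `w₀` one has
`Y_I • [e] = 𝟏` and `Y_I • [w₀] = 𝟏`; i.e. the Schubert class `ζ_{w₀}` and the special
Schubert class `σ_{w₀}` both equal the fundamental class `𝟏`. -/
theorem stmt5 {ι : Type} [Fintype ι] {W : Type} [Group W] [Fintype W]
    (φ : W →* (S ι ≃ₐ[ℚ] S ι)) (ψ : W →* RingAut (Q ι))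
    (sr : ι → W) (ref : S ι → W) (P : Finset (S ι))
    (hctx : IsRootCtx φ ψ sr ref P)
    (w0 : W) (hw0 : ∀ a ∈ P, -(φ w0 a) ∈ P)
    (l : List ι) (hl : IsRed φ P sr l w0) :
    heckeWord φ sr l (fixedPt φ P 1) = (fun _ => 1) ∧
    heckeWord φ sr l (fixedPt φ P w0) = (fun _ => 1) := by
  constructor
  · refine main_u hctx w0 hw0 l hl 1 ?_ ?_
    · intro a ha
      rw [phi_one_apply]
      exact dvd_xPi hctx ha
    · rw [phi_one_apply]
      exact xPi_homog hctx
  · refine main_u hctx w0 hw0 l hl w0 ?_ ?_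
    · intro a ha
      rw [phiw0_xPi hctx w0 hw0]
      exact dvd_prodP ha
    · rw [phiw0_xPi hctx w0 hw0]
      exact prodP_homog hctx

end RootCtx
end
end

section
/- Let z ∈ Z, let u, w ∈ W, let I = (i₁,…,i_l) be a reduced word of w⁻¹ and I* := (i_l,…,i₁) (a reduced word of w). Then Σ_{y∈W} (Y_I • [u])(y) · z(y) / y(x_Π) = (Y_{I*} • z)(u). Equivalently, π • (ζ(u)_I · z) = (Y_{I*} • z)(u) · 𝟏, where ζ(u)_I := δ_u ⊙ (Y_I • [e]) = Y_I • [u] is the twisted Schubert class and (π • z')(v) := Σ_{y∈W} z'(y)/y(x_Π) is the push-forward action. -/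
open scoped Classical

noncomputable section

namespace RootCtx


open MvPolynomial

section Aux

set_option linter.unusedSectionVars false

variable {ι : Type} [Fintype ι] {W : Type} [Group W] [Fintype W]

lemma aux_negX_not_mem (P : Finset (S ι))
    (reduced : ∀ a ∈ P, ∀ q : ℚ, q • a ∈ P → q = 1)
    (hX : ∀ i : ι, X i ∈ P) (i : ι) : (-(X i : S ι)) ∉ P := by
  intro h
  have h2 := reduced (X i) (hX i) (-1) (by simpa using h)
  norm_num at h2

lemma aux_sr_invol_apply (φ : W →* (S ι ≃ₐ[ℚ] S ι)) {sr : ι → W} {i : ι}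
    (hs2 : sr i * sr i = 1) (f : S ι) :
    φ (sr i) (φ (sr i) f) = f := by
  have : φ (sr i * sr i) f = f := by rw [hs2, map_one]; rfl
  rwa [map_mul, AlgEquiv.mul_apply] at this

lemma aux_phi_sr_xPi (φ : W →* (S ι ≃ₐ[ℚ] S ι)) (sr : ι → W) (P : Finset (S ι)) (i : ι)
    (hs2 : sr i * sr i = 1)
    (hX : ∀ i : ι, X i ∈ P)
    (simple_neg : φ (sr i) (X i) = - X i)
    (simple_perm : ∀ a ∈ P, a ≠ X i → φ (sr i) a ∈ P)
    (reduced : ∀ a ∈ P, ∀ q : ℚ, q • a ∈ P → q = 1) :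
    φ (sr i) (xPi P) = -(xPi P) := by
  unfold xPi
  rw [map_prod]
  rw [← Finset.mul_prod_erase P (fun a => φ (sr i) (-a)) (hX i),
      ← Finset.mul_prod_erase P (fun a => -a) (hX i)]
  have hmain : ∏ a ∈ P.erase (X i), φ (sr i) (-a) = ∏ a ∈ P.erase (X i), (-a) := by
    refine Finset.prod_bij' (fun a _ => φ (sr i) a) (fun a _ => φ (sr i) a) ?_ ?_ ?_ ?_ ?_
    · intro a ha
      rw [Finset.mem_erase] at ha ⊢
      refine ⟨?_, simple_perm a ha.2 ha.1⟩
      intro h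
      have : a = φ (sr i) (X i) := by
        rw [← h]; exact (aux_sr_invol_apply φ hs2 a).symm
      rw [simple_neg] at this
      exact aux_negX_not_mem P reduced hX i (this ▸ ha.2)
    · intro a ha
      rw [Finset.mem_erase] at ha ⊢
      refine ⟨?_, simple_perm a ha.2 ha.1⟩
      intro h
      have : a = φ (sr i) (X i) := by
        rw [← h]; exact (aux_sr_invol_apply φ hs2 a).symm
      rw [simple_neg] at this
      exact aux_negX_not_mem P reduced hX i (this ▸ ha.2)
    · intro a _; exact aux_sr_invol_apply φ hs2 a
    · intro a _; exact aux_sr_invol_apply φ hs2 a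
    · intro a _; simp [map_neg]
  rw [hmain, map_neg, simple_neg, neg_neg, neg_mul, neg_neg]

lemma aux_adjoint (φ : W →* (S ι ≃ₐ[ℚ] S ι)) (sr : ι → W) (i : ι) (xp : S ι)
    (hs2 : sr i * sr i = 1)
    (simple_neg : φ (sr i) (X i) = - X i)
    (hxp : φ (sr i) xp = -xp)
    (A z : W → Q ι) :
    ∑ y : W, hecke φ sr i A y * z y / algebraMap (S ι) (Q ι) (φ y xp)
      = ∑ y : W, A y * hecke φ sr i z y / algebraMap (S ι) (Q ι) (φ y xp) := by
  set alg := algebraMap (S ι) (Q ι)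
  set C : W → Q ι := fun y => alg (φ y (X i)) with hC
  set D : W → Q ι := fun y => alg (φ y xp) with hD
  have hCs : ∀ y : W, C (y * sr i) = -(C y) := by
    intro y
    simp only [hC, map_mul, AlgEquiv.mul_apply, simple_neg, map_neg]
  have hDs : ∀ y : W, D (y * sr i) = -(D y) := by
    intro y
    simp only [hD, map_mul, AlgEquiv.mul_apply, hxp, map_neg]
  have hL : ∀ y : W, hecke φ sr i A y * z y / D y
      = A (y * sr i) * z y / (C y * D y) - A y * z y / (C y * D y) := by
    intro y
    simp only [hecke]
    rw [div_mul_eq_mul_div, div_div, sub_mul, sub_div]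
  have hR : ∀ y : W, A y * hecke φ sr i z y / D y
      = A y * z (y * sr i) / (C y * D y) - A y * z y / (C y * D y) := by
    intro y
    simp only [hecke]
    rw [mul_div_assoc', div_div, mul_sub, sub_div]
  show ∑ y : W, hecke φ sr i A y * z y / D y = ∑ y : W, A y * hecke φ sr i z y / D y
  simp only [hL, hR, Finset.sum_sub_distrib]
  congr 1
  refine Fintype.sum_equiv (Equiv.mulRight (sr i)) _ _ ?_
  intro y
  simp only [Equiv.coe_mulRight]
  rw [mul_assoc, hs2, mul_one, hCs, hDs, neg_mul_neg]

lemma aux_main (φ : W →* (S ι ≃ₐ[ℚ] S ι)) (ψ : W →* RingAut (Q ι))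
    (sr : ι → W) (ref : S ι → W) (P : Finset (S ι))
    (hctx : IsRootCtx φ ψ sr ref P)
    (u : W) (l : List ι) (z : W → Q ι) :
    ∑ y : W, heckeWord φ sr l (fixedPt φ P u) y * z y
        / algebraMap (S ι) (Q ι) (φ y (xPi P))
      = heckeWord φ sr l.reverse z u := by
  induction l generalizing z with
  | nil =>
    simp only [heckeWord, List.foldr_nil, List.reverse_nil, fixedPt]
    rw [Finset.sum_eq_single u]
    · have hxne : (xPi P : S ι) ≠ 0 := by
        unfold xPi
        refine Finset.prod_ne_zero_iff.mpr ?_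
        intro a ha h
        exact hctx.zero_not_mem (neg_eq_zero.mp h ▸ ha)
      have hne : algebraMap (S ι) (Q ι) (φ u (xPi P)) ≠ 0 := by
        rw [map_ne_zero_iff _ (IsFractionRing.injective (S ι) (Q ι))]
        exact fun h => hxne ((φ u).injective (by simpa using h))
      rw [if_pos rfl, mul_comm, mul_div_assoc, div_self hne, mul_one]
    · intro y _ hy
      rw [if_neg hy, zero_mul, zero_div]
    · intro h
      exact absurd (Finset.mem_univ u) h
  | cons i t ih =>
    have hs2 : sr i * sr i = 1 := by
      rw [← hctx.ref_simple i]
      exact hctx.ref_invol (X i) (hctx.simple_mem i)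
    have hxp : φ (sr i) (xPi P) = -(xPi P) :=
      aux_phi_sr_xPi φ sr P i hs2 hctx.simple_mem (hctx.simple_neg i)
        (hctx.simple_perm i) hctx.reduced
    have hW : heckeWord φ sr (i :: t) (fixedPt φ P u)
        = hecke φ sr i (heckeWord φ sr t (fixedPt φ P u)) := rfl
    rw [hW, aux_adjoint φ sr i (xPi P) hs2 (hctx.simple_neg i) hxp _ z,
        ih (hecke φ sr i z)]
    rw [List.reverse_cons]
    show heckeWord φ sr t.reverse (hecke φ sr i z) u
      = heckeWord φ sr (t.reverse ++ [i]) z u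
    simp only [heckeWord, List.foldr_append, List.foldr_cons, List.foldr_nil]

end Aux

/-- Let `z ∈ Z` (the structure algebra), `u, w ∈ W`, `I` a reduced word
of `w⁻¹` and `I*` its reverse (a reduced word of `w`).  Then
`Σ_{y∈W} (Y_I • [u])(y)·z(y)/y(x_Π) = (Y_{I*} • z)(u)`; i.e.
`π • (ζ(u)_I · z) = (Y_{I*} • z)(u) · 𝟏`. -/
theorem stmt6 {ι : Type} [Fintype ι] {W : Type} [Group W] [Fintype W]
    (φ : W →* (S ι ≃ₐ[ℚ] S ι)) (ψ : W →* RingAut (Q ι))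
    (sr : ι → W) (ref : S ι → W) (P : Finset (S ι))
    (hctx : IsRootCtx φ ψ sr ref P)
    (z : W → S ι) (hz : inZ ref P z)
    (u w : W) (l : List ι) (hl : IsRed φ P sr l w⁻¹) :
    ∑ y : W, heckeWord φ sr l (fixedPt φ P u) y *
        algebraMap (S ι) (Q ι) (z y) / algebraMap (S ι) (Q ι) (φ y (xPi P))
      = heckeWord φ sr l.reverse (fun y => algebraMap (S ι) (Q ι) (z y)) u := by
  exact aux_main φ ψ sr ref P hctx u l (fun y => algebraMap (S ι) (Q ι) (z y))

end RootCtx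
end
end

section
/- For all u, w, v ∈ W with ℓ(w) + ℓ(v) < ℓ(u), any reduced word P of w and any reduced word Q of v⁻¹: (Y_P • (Y_Q • [u]))(e) = 0. -/
open scoped Classical

noncomputable section

namespace RootCtx

open MvPolynomial

variable {ι : Type} [Fintype ι] {W : Type} [Group W] [Fintype W]
  {φ : W →* (S ι ≃ₐ[ℚ] S ι)} {ψ : W →* RingAut (Q ι)}
  {sr : ι → W} {ref : S ι → W} {P : Finset (S ι)}

lemma aux_neg_notMem (hctx : IsRootCtx φ ψ sr ref P) {a : S ι} (ha : a ∈ P) :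
    -a ∉ P := by
  intro hna
  obtain ⟨c, hc⟩ := hctx.pos_nat a ha
  obtain ⟨d, hd⟩ := hctx.pos_nat (-a) hna
  have h0 : ∑ i, (((c i : ℚ) + (d i : ℚ))) • X i = (0 : S ι) := by
    simp only [add_smul, Finset.sum_add_distrib, ← hc, ← hd]
    ring
  have hj : ∀ j, (c j : ℚ) + (d j : ℚ) = 0 := by
    intro j
    have := congrArg (MvPolynomial.coeff (Finsupp.single j 1)) h0
    simp only [MvPolynomial.coeff_sum, MvPolynomial.coeff_smul, MvPolynomial.coeff_X',
      smul_eq_mul, mul_ite, mul_one, mul_zero, MvPolynomial.coeff_zero] at this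
    have hcond : ∀ x : ι, ((Finsupp.single x 1 : ι →₀ ℕ) = Finsupp.single j 1) ↔ x = j :=
      fun x => Finsupp.single_left_inj one_ne_zero
    simp only [hcond] at this
    rw [Finset.sum_ite_eq' Finset.univ j] at this
    simpa using this
  have hc0 : ∀ j, (c j : ℚ) = 0 := by
    intro j
    have h1 : (0 : ℚ) ≤ (c j : ℚ) := Nat.cast_nonneg _
    have h2 : (0 : ℚ) ≤ (d j : ℚ) := Nat.cast_nonneg _
    linarith [hj j]
  have ha0 : a = 0 := by
    rw [hc]
    apply Finset.sum_eq_zero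
    intro i _
    rw [hc0 i, zero_smul]
  exact hctx.zero_not_mem (ha0 ▸ ha)

lemma len_eq (w : W) : len φ P w = (P.filter fun a => -(φ w a) ∈ P).card := by
  rw [len, ← Set.ncard_coe_finset]
  congr 1
  ext a
  simp

lemma len_one (hctx : IsRootCtx φ ψ sr ref P) : len φ P (1 : W) = 0 := by
  rw [len_eq]
  rw [Finset.card_eq_zero, Finset.eq_empty_iff_forall_notMem]
  intro a ha
  obtain ⟨haP, hna⟩ := Finset.mem_filter.1 ha
  rw [map_one, AlgEquiv.one_apply] at hna
  exact aux_neg_notMem hctx haP hna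

lemma len_mul_simple_le (hctx : IsRootCtx φ ψ sr ref P) (x : W) (i : ι) :
    len φ P (x * sr i) ≤ len φ P x + 1 := by
  rw [len_eq, len_eq]
  set F := (P.filter fun a => -(φ (x * sr i) a) ∈ P) with hF
  set G := (P.filter fun a => -(φ x a) ∈ P) with hG
  have hmap : ∀ a ∈ F \ {X i}, φ (sr i) a ∈ G := by
    intro a ha
    rw [Finset.mem_sdiff, Finset.mem_singleton] at ha
    obtain ⟨haF, hne⟩ := ha
    obtain ⟨haP, hneg⟩ := Finset.mem_filter.1 haF
    refine Finset.mem_filter.2 ⟨hctx.simple_perm i a haP hne, ?_⟩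
    rwa [map_mul, AlgEquiv.mul_apply] at hneg
  have hinj : Set.InjOn (fun a => φ (sr i) a) ↑(F \ {X i}) := by
    intro a _ b _ hab
    exact (φ (sr i)).injective hab
  have h1 : (F \ {X i}).card ≤ G.card := Finset.card_le_card_of_injOn _ hmap hinj
  have h2 : F.card ≤ (F \ {X i}).card + 1 := by
    have hsub : F ⊆ (F \ {X i}) ∪ {X i} := by
      intro a ha
      by_cases h : a = X i <;> simp [h, ha]
    calc F.card ≤ ((F \ {X i}) ∪ {X i}).card := Finset.card_le_card hsub
      _ ≤ (F \ {X i}).card + 1 := by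
          simpa using Finset.card_union_le (F \ {X i}) ({X i} : Finset (S ι))
  omega

lemma len_prod_le (hctx : IsRootCtx φ ψ sr ref P) (m : List ι) :
    len φ P ((m.map sr).prod) ≤ m.length := by
  induction m using List.reverseRecOn with
  | nil => simp [len_one hctx]
  | append_singleton l i ih =>
      rw [List.map_append, List.prod_append]
      simp only [List.map_cons, List.map_nil, List.prod_cons, List.prod_nil, mul_one,
        List.length_append, List.length_cons, List.length_nil]
      calc len φ P ((l.map sr).prod * sr i) ≤ len φ P (l.map sr).prod + 1 :=
            len_mul_simple_le hctx _ _
        _ ≤ l.length + 1 := by omega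

lemma len_inv_le (w : W) : len φ P w⁻¹ ≤ len φ P w := by
  rw [len_eq, len_eq]
  apply Finset.card_le_card_of_injOn (fun a => -(φ w⁻¹ a))
  · intro a ha
    obtain ⟨haP, hna⟩ := Finset.mem_filter.1 ha
    refine Finset.mem_filter.2 ⟨hna, ?_⟩
    have hcancel : φ w (φ w⁻¹ a) = a := by
      rw [← AlgEquiv.mul_apply, ← map_mul, mul_inv_cancel, map_one, AlgEquiv.one_apply]
    rw [map_neg, hcancel, neg_neg]
    exact haP
  · intro a _ b _ hab
    exact (φ w⁻¹).injective (neg_injective hab)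

lemma len_inv_eq (w : W) : len φ P w⁻¹ = len φ P w :=
  le_antisymm (len_inv_le w) (by simpa using len_inv_le (φ := φ) (P := P) w⁻¹)

lemma heckeWord_support (l : List ι) (z : W → Q ι) (v : W)
    (h : heckeWord φ sr l z v ≠ 0) :
    ∃ m : List ι, m.length ≤ l.length ∧ z (v * (m.map sr).prod) ≠ 0 := by
  induction l generalizing v with
  | nil => exact ⟨[], by simp, by simpa [heckeWord] using h⟩
  | cons i l ih =>
      have h' : heckeWord φ sr l z (v * sr i) ≠ 0 ∨ heckeWord φ sr l z v ≠ 0 := by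
        by_contra hc
        push_neg at hc
        apply h
        show hecke φ sr i (heckeWord φ sr l z) v = 0
        rw [hecke]
        simp only [hc.1, hc.2, sub_zero, sub_self, zero_div]
      rcases h' with h' | h'
      · obtain ⟨m, hm, hz⟩ := ih (v * sr i) h'
        refine ⟨i :: m, by simpa using Nat.succ_le_succ hm, ?_⟩
        rwa [List.map_cons, List.prod_cons, ← mul_assoc]
      · obtain ⟨m, hm, hz⟩ := ih v h'
        exact ⟨m, le_trans hm (by simp), hz⟩

/-- For all `u, w, v ∈ W` with `ℓ(w) + ℓ(v) < ℓ(u)`, any reduced word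
`P` of `w` and any reduced word `Q` of `v⁻¹`: `(Y_P • (Y_Q • [u]))(e) = 0`. -/
theorem stmt12 {ι : Type} [Fintype ι] {W : Type} [Group W] [Fintype W]
    (φ : W →* (S ι ≃ₐ[ℚ] S ι)) (ψ : W →* RingAut (Q ι))
    (sr : ι → W) (ref : S ι → W) (P : Finset (S ι))
    (hctx : IsRootCtx φ ψ sr ref P)
    (u w v : W) (h : len φ P w + len φ P v < len φ P u)
    (lP lQ : List ι)
    (hP : IsRed φ P sr lP w) (hQ : IsRed φ P sr lQ v⁻¹) :
    heckeWord φ sr lP (heckeWord φ sr lQ (fixedPt φ P u)) 1 = 0 := by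
  by_contra hne
  obtain ⟨m1, hm1, h1⟩ := heckeWord_support lP _ 1 hne
  obtain ⟨m2, hm2, h2⟩ := heckeWord_support lQ _ _ h1
  have hu : 1 * (m1.map sr).prod * (m2.map sr).prod = u := by
    by_contra hc
    apply h2
    simp only [fixedPt]
    rw [if_neg hc]
  have hl : len φ P u ≤ m1.length + m2.length := by
    have hle := len_prod_le hctx (m1 ++ m2)
    rw [List.map_append, List.prod_append] at hle
    rw [← hu, one_mul]
    simpa using hle
  have hPl := hP.2
  have hQl := hQ.2
  have hv : len φ P v⁻¹ = len φ P v := len_inv_eq v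
  omega

end RootCtx
end
end
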